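/- For a clustering system 𝒞 on a finite set X the following statements are equivalent: (1) there is a level-1 network N on X with 𝒞 ⊆ 𝒞_N (𝒞 is compatible with a level-1 network); (2) there is a level-1 network N on X with 𝒞_N = 𝓘(𝒞); (3) 𝒞 satisfies property (L). -/

import Mathlib

namespace PhyloNet

/-- A (rooted) network on a set `X` of taxa: a finite directed acyclic graph with a
unique vertex of indegree 0 (the root), whose vertices of outdegree 0 (the leaves)
are exactly the elements of `X` (via the injection `leafEmb`). -/
structure Network (X : Type) where
  V : Type
  [fintypeV : Fintype V]
  E : V → V → Prop
  leafEmb : X → V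
  leafEmb_inj : Function.Injective leafEmb
  acyclic : ∀ u v : V, E u v → ¬ Relation.ReflTransGen E v u
  root_unique : ∃! r : V, ∀ u : V, ¬ E u r
  leaf_iff : ∀ v : V, (∀ w : V, ¬ E v w) ↔ ∃ x : X, leafEmb x = v

attribute [instance] Network.fintypeV

variable {X : Type}

namespace Network

/-- `reach u v` : there is a directed path (possibly trivial) from `u` to `v`,
i.e. `v ⪯ u`. -/
def reach (N : Network X) : N.V → N.V → Prop := Relation.ReflTransGen N.E

/-- The cluster of a vertex: the set of leaves reachable from it. -/
def cluster (N : Network X) (v : N.V) : Set X := {x | N.reach v (N.leafEmb x)}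

/-- The clustering system of a network. -/
def CS (N : Network X) : Set (Set X) := Set.range N.cluster

noncomputable def inDeg (N : Network X) (v : N.V) : ℕ := {u | N.E u v}.ncard
noncomputable def outDeg (N : Network X) (v : N.V) : ℕ := {w | N.E v w}.ncard

def IsHybrid (N : Network X) (v : N.V) : Prop := 1 < N.inDeg v
def IsTreeVertex (N : Network X) (v : N.V) : Prop := N.inDeg v ≤ 1
def IsLeaf (N : Network X) (v : N.V) : Prop := ∀ w : N.V, ¬ N.E v w

/-- The arc `(u,w)` is a shortcut: `w ≺ v` for some child `v ≠ w` of `u`. -/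
def IsShortcut (N : Network X) (u w : N.V) : Prop :=
  N.E u w ∧ ∃ v : N.V, N.E u v ∧ v ≠ w ∧ N.reach v w

def ShortcutFree (N : Network X) : Prop := ∀ u w : N.V, ¬ N.IsShortcut u w

/-- Path-cluster comparability. -/
def PCC (N : Network X) : Prop :=
  ∀ u v : N.V, (N.reach u v ∨ N.reach v u) ↔
    (N.cluster u ⊆ N.cluster v ∨ N.cluster v ⊆ N.cluster u)

def SemiRegular (N : Network X) : Prop := N.ShortcutFree ∧ N.PCC

/-- `N` is regular iff `v ↦ C(v)` is a digraph isomorphism onto the Hasse diagram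
of `𝒞_N` (ordered by inclusion). -/
def Regular (N : Network X) : Prop :=
  Function.Injective N.cluster ∧
  ∀ u v : N.V, N.E u v ↔
    (N.cluster v ⊂ N.cluster u ∧
      ¬ ∃ w : N.V, N.cluster v ⊂ N.cluster w ∧ N.cluster w ⊂ N.cluster u)

def Separated (N : Network X) : Prop := ∀ v : N.V, N.IsHybrid v → N.outDeg v = 1

def Phylogenetic (N : Network X) : Prop := ¬ ∃ v : N.V, N.outDeg v = 1 ∧ N.inDeg v ≤ 1

def Binary (N : Network X) : Prop :=
  (∀ v : N.V, N.IsTreeVertex v → (N.IsLeaf v ∨ N.outDeg v = 2)) ∧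
  (∀ v : N.V, N.IsHybrid v → N.inDeg v = 2 ∧ N.outDeg v = 1)

def TreeChild (N : Network X) : Prop :=
  ∀ v : N.V, ¬ N.IsLeaf v → ∃ u : N.V, N.E v u ∧ N.inDeg u = 1

/-- The underlying undirected (simple) graph of a network. -/
def UG (N : Network X) : SimpleGraph N.V where
  Adj u v := u ≠ v ∧ (N.E u v ∨ N.E v u)
  symm := ⟨fun _ _ h => ⟨Ne.symm h.1, Or.symm h.2⟩⟩
  loopless := ⟨fun _ h => h.1 rfl⟩

/-- A set of vertices is biconnected if it induces a connected undirected graph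
with no cutvertex. -/
def IsBiconn (N : Network X) (B : Set N.V) : Prop :=
  (N.UG.induce B).Connected ∧ ∀ v ∈ B, (N.UG.induce (B \ {v})).Preconnected

/-- A block: a maximal biconnected set of vertices. -/
def IsBlock (N : Network X) (B : Set N.V) : Prop :=
  N.IsBiconn B ∧ ∀ B' : Set N.V, B ⊆ B' → N.IsBiconn B' → B' = B

/-- The set `B` contains an undirected cycle (`B` is a non-trivial block when it is
a block). -/
def HasCycleIn (N : Network X) (B : Set N.V) : Prop :=
  ∃ (v : N.V) (c : N.UG.Walk v v), c.IsCycle ∧ ∀ w ∈ c.support, w ∈ B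

/-- Level-1: each block contains at most one hybrid vertex that is not
`⪯`-maximal in the block. -/
def Level1 (N : Network X) : Prop :=
  ∀ B : Set N.V, N.IsBlock B →
    Set.Subsingleton {v : N.V | v ∈ B ∧ N.IsHybrid v ∧ ∃ u ∈ B, u ≠ v ∧ N.reach u v}

/-- The set `B` (with the edges of the underlying undirected graph between its
members) is exactly an undirected cycle. -/
def IsCycleSet (N : Network X) (B : Set N.V) : Prop :=
  ∃ (v : N.V) (c : N.UG.Walk v v), c.IsCycle ∧ (∀ w : N.V, w ∈ c.support ↔ w ∈ B) ∧
    ∀ u w : N.V, (N.UG.Adj u w ∧ u ∈ B ∧ w ∈ B) ↔ s(u, w) ∈ c.edges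

/-- A galled tree: every non-trivial block is an undirected cycle. -/
def GalledTree (N : Network X) : Prop :=
  ∀ B : Set N.V, N.IsBlock B → N.HasCycleIn B → N.IsCycleSet B

/-- Quasi-binary: hybrid vertices have indegree 2 and outdegree 1, and the
`⪯`-maximal vertex of every non-trivial block has outdegree 2. -/
def QuasiBinary (N : Network X) : Prop :=
  (∀ v : N.V, N.IsHybrid v → N.inDeg v = 2 ∧ N.outDeg v = 1) ∧
  ∀ B : Set N.V, N.IsBlock B → N.HasCycleIn B →
    ∀ v ∈ B, (∀ u ∈ B, N.reach u v → u = v) → N.outDeg v = 2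

/-- `LCA A`: the `⪯`-minimal vertices among the common ancestors of `A`. -/
def LCA (N : Network X) (A : Set X) : Set N.V :=
  {v : N.V | A ⊆ N.cluster v ∧ ∀ u : N.V, A ⊆ N.cluster u → N.reach v u → u = v}

/-- An lca-network: every nonempty set of leaves has a unique least common
ancestor. -/
def LcaNetwork (N : Network X) : Prop :=
  ∀ A : Set X, A.Nonempty → ∃ v : N.V, N.LCA A = {v}

/-- A strong lca-network. -/
def StrongLca (N : Network X) : Prop :=
  N.LcaNetwork ∧
  ∀ A : Set X, A.Nonempty → ∃ x ∈ A, ∃ y ∈ A, N.LCA ({x, y} : Set X) = N.LCA A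

/-- Cluster networks in the sense of Huson & Rupp. -/
def ClusterNetwork (N : Network X) : Prop :=
  N.PCC ∧
  (∀ u v : N.V, N.cluster u = N.cluster v ↔
    (u = v ∨ (N.IsHybrid v ∧ N.E v u) ∨ (N.IsHybrid u ∧ N.E u v))) ∧
  (∀ u v : N.V, N.E v u →
    ¬ ∃ w : N.V, N.cluster u ⊂ N.cluster w ∧ N.cluster w ⊂ N.cluster v) ∧
  (∀ v : N.V, N.IsHybrid v →
    ∃ u : N.V, N.E v u ∧ (∀ w : N.V, N.E v w → w = u) ∧ N.IsTreeVertex u)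

/-- The multiplicity of a cluster in the cluster multiset `𝓜_N`. -/
noncomputable def multiplicity (N : Network X) (C : Set X) : ℕ :=
  Nat.card {v : N.V // N.cluster v = C}

/-- Isomorphism of networks on the same leaf set `X`, fixing every leaf. -/
def Isomorphic (N N' : Network X) : Prop :=
  ∃ φ : N.V ≃ N'.V, (∀ u v : N.V, N.E u v ↔ N'.E (φ u) (φ v)) ∧
    ∀ x : X, φ (N.leafEmb x) = N'.leafEmb x

end Network

/-- A clustering system on `X`. -/
def IsClusteringSystem {X : Type} (𝒞 : Set (Set X)) : Prop :=
  ∅ ∉ 𝒞 ∧ Set.univ ∈ 𝒞 ∧ ∀ x : X, {x} ∈ 𝒞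

/-- Two sets overlap if `A ∩ B ∉ {∅, A, B}`. -/
def Overlap {X : Type} (A B : Set X) : Prop :=
  (A ∩ B).Nonempty ∧ A ∩ B ≠ A ∧ A ∩ B ≠ B

/-- Closed (under pairwise nonempty intersections). -/
def IsClosedCS {X : Type} (𝒞 : Set (Set X)) : Prop :=
  ∀ A ∈ 𝒞, ∀ B ∈ 𝒞, (A ∩ B).Nonempty → A ∩ B ∈ 𝒞

/-- Property (L). -/
def PropertyL {X : Type} (𝒞 : Set (Set X)) : Prop :=
  ∀ C₁ ∈ 𝒞, ∀ C₂ ∈ 𝒞, ∀ C₃ ∈ 𝒞, Overlap C₁ C₂ → Overlap C₁ C₃ → C₁ ∩ C₂ = C₁ ∩ C₃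

/-- Weak hierarchy. -/
def WeakHierarchy {X : Type} (𝒞 : Set (Set X)) : Prop :=
  ∀ C₁ ∈ 𝒞, ∀ C₂ ∈ 𝒞, ∀ C₃ ∈ 𝒞,
    C₁ ∩ C₂ ∩ C₃ = C₁ ∩ C₂ ∨ C₁ ∩ C₂ ∩ C₃ = C₁ ∩ C₃ ∨
    C₁ ∩ C₂ ∩ C₃ = C₂ ∩ C₃ ∨ C₁ ∩ C₂ ∩ C₃ = ∅

/-- Property (N3O): no three distinct pairwise overlapping clusters. -/
def N3O {X : Type} (𝒞 : Set (Set X)) : Prop :=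
  ¬ ∃ C₁ ∈ 𝒞, ∃ C₂ ∈ 𝒞, ∃ C₃ ∈ 𝒞,
    C₁ ≠ C₂ ∧ C₁ ≠ C₃ ∧ C₂ ≠ C₃ ∧ Overlap C₁ C₂ ∧ Overlap C₁ C₃ ∧ Overlap C₂ C₃

/-- Property (2-Inc). -/
def TwoInc {X : Type} (𝒞 : Set (Set X)) : Prop :=
  ∀ C ∈ 𝒞,
    {A : Set X | A ∈ 𝒞 ∧ A ⊂ C ∧ ∀ B ∈ 𝒞, B ⊂ C → A ⊆ B → A = B}.ncard ≤ 2 ∧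
    {A : Set X | A ∈ 𝒞 ∧ C ⊂ A ∧ ∀ B ∈ 𝒞, C ⊂ B → B ⊆ A → A = B}.ncard ≤ 2

/-- The intersection closure: all nonempty intersections of nonempty subfamilies. -/
def interClosure {X : Type} (𝒞 : Set (Set X)) : Set (Set X) :=
  {A : Set X | A.Nonempty ∧ ∃ S : Set (Set X), S ⊆ 𝒞 ∧ S.Nonempty ∧ A = ⋂₀ S}

lemma overlap_symm {A B : Set X} (h : Overlap A B) : Overlap B A := by
  obtain ⟨h1, h2, h3⟩ := h
  exact ⟨by rwa [Set.inter_comm], by rwa [Set.inter_comm], by rwa [Set.inter_comm]⟩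

lemma overlap_iff {A B : Set X} :
    Overlap A B ↔ (A ∩ B).Nonempty ∧ ¬ A ⊆ B ∧ ¬ B ⊆ A := by
  unfold Overlap
  rw [Ne, Ne, Set.inter_eq_left, Set.inter_eq_right]

/-- trichotomy for two sets with nonempty intersection -/
lemma rel_cases {A B : Set X} (h : (A ∩ B).Nonempty) :
    A ⊆ B ∨ B ⊆ A ∨ Overlap A B := by
  by_cases h1 : A ⊆ B
  · exact Or.inl h1
  by_cases h2 : B ⊆ A
  · exact Or.inr (Or.inl h2)
  · exact Or.inr (Or.inr (overlap_iff.mpr ⟨h, h1, h2⟩))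

lemma not_overlap_of_subset {A B : Set X} (h : A ⊆ B) : ¬ Overlap A B := by
  intro hov
  exact hov.2.1 (Set.inter_eq_left.mpr h)

/-- Key (L) fact: an "overlap value" `E ∩ F` is comparable-or-disjoint to every member. -/
lemma value_comparable {𝒟 : Set (Set X)} (hL : PropertyL 𝒟)
    {E F A : Set X} (hE : E ∈ 𝒟) (hF : F ∈ 𝒟) (hA : A ∈ 𝒟) (hEF : Overlap E F) :
    E ∩ F ⊆ A ∨ A ⊆ E ∩ F ∨ A ∩ (E ∩ F) = ∅ := by
  by_cases hne : A ∩ (E ∩ F) = ∅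
  · exact Or.inr (Or.inr hne)
  by_cases hsub : A ⊆ E ∩ F
  · exact Or.inr (Or.inl hsub)
  left
  have hACne : (A ∩ (E ∩ F)).Nonempty := Set.nonempty_iff_ne_empty.mpr hne
  have hAE : (A ∩ E).Nonempty :=
    hACne.mono (Set.inter_subset_inter_right A Set.inter_subset_left)
  have hAF : (A ∩ F).Nonempty :=
    hACne.mono (Set.inter_subset_inter_right A Set.inter_subset_right)
  have hEfF : ¬ E ⊆ F := (overlap_iff.mp hEF).2.1
  have hFfE : ¬ F ⊆ E := (overlap_iff.mp hEF).2.2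
  rcases rel_cases hAE with hAsubE | hEsubA | hovAE
  · rcases rel_cases hAF with hAsubF | hFsubA | hovAF
    · exact absurd (Set.subset_inter hAsubE hAsubF) hsub
    · exact absurd (hFsubA.trans hAsubE) hFfE
    · -- A overlaps F : (L) at F with partners E and A
      have h := hL F hF E hE A hA (overlap_symm hEF) (overlap_symm hovAF)
      intro x hx
      have : x ∈ F ∩ A := h ▸ (⟨hx.2, hx.1⟩ : x ∈ F ∩ E)
      exact this.2
  · rcases rel_cases hAF with hAsubF | hFsubA | hovAF
    · exact absurd (hEsubA.trans hAsubF) hEfF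
    · exact fun x hx => hEsubA hx.1
    · have h := hL F hF E hE A hA (overlap_symm hEF) (overlap_symm hovAF)
      intro x hx
      have : x ∈ F ∩ A := h ▸ (⟨hx.2, hx.1⟩ : x ∈ F ∩ E)
      exact this.2
  · -- A overlaps E : (L) at E with partners F and A
    have h := hL E hE F hF A hA hEF (overlap_symm hovAE)
    intro x hx
    have : x ∈ E ∩ A := h ▸ (⟨hx.1, hx.2⟩ : x ∈ E ∩ F)
    exact this.2

/-- nothing overlaps an overlap value (for pair-intersections). -/
lemma value_not_overlap_pair {𝒟 : Set (Set X)} (hL : PropertyL 𝒟)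
    {E F A B : Set X} (hE : E ∈ 𝒟) (hF : F ∈ 𝒟) (hA : A ∈ 𝒟) (hB : B ∈ 𝒟)
    (hEF : Overlap E F) : ¬ Overlap (E ∩ F) (A ∩ B) := by
  intro hov
  obtain ⟨hne, hneC, hneD⟩ := hov
  rcases value_comparable hL hE hF hA hEF with h | h | h
  · rcases value_comparable hL hE hF hB hEF with h' | h' | h'
    · exact hneC (Set.inter_eq_left.mpr (Set.subset_inter h h'))
    · refine hneD (Set.inter_eq_right.mpr ?_)
      intro x hx
      exact h' hx.2
    · refine (Set.nonempty_iff_ne_empty.mp hne) ?_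
      apply Set.eq_empty_of_subset_empty
      intro x hx
      rw [← h']
      exact ⟨hx.2.2, hx.1⟩
  · refine hneD (Set.inter_eq_right.mpr ?_)
    intro x hx
    exact h hx.1
  · refine (Set.nonempty_iff_ne_empty.mp hne) ?_
    apply Set.eq_empty_of_subset_empty
    intro x hx
    rw [← h]
    exact ⟨hx.2.1, hx.1⟩

lemma subset_interClosure {𝒞 : Set (Set X)} (h0 : ∅ ∉ 𝒞) : 𝒞 ⊆ interClosure 𝒞 := by
  intro A hA
  refine ⟨?_, {A}, by simpa using hA, ⟨A, rfl⟩, by simp⟩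
  rcases Set.eq_empty_or_nonempty A with h | h
  · exact absurd (h ▸ hA) h0
  · exact h

lemma nonempty_of_mem_interClosure {𝒞 : Set (Set X)} {A : Set X}
    (h : A ∈ interClosure 𝒞) : A.Nonempty := h.1

lemma inter_mem_interClosure {𝒞 : Set (Set X)} {A B : Set X}
    (hA : A ∈ interClosure 𝒞) (hB : B ∈ interClosure 𝒞) (hne : (A ∩ B).Nonempty) :
    A ∩ B ∈ interClosure 𝒞 := by
  obtain ⟨-, S, hS𝒞, hSne, rfl⟩ := hA
  obtain ⟨-, T, hT𝒞, hTne, rfl⟩ := hB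
  exact ⟨hne, S ∪ T, Set.union_subset hS𝒞 hT𝒞, hSne.mono Set.subset_union_left,
    (Set.sInter_union S T).symm⟩

lemma triple_to_pair {𝒞 : Set (Set X)} (hL : PropertyL 𝒞) {A E F : Set X}
    (hA : A ∈ 𝒞) (hE : E ∈ 𝒞) (hF : F ∈ 𝒞) (hne : (A ∩ (E ∩ F)).Nonempty) :
    ∃ G H, G ∈ 𝒞 ∧ H ∈ 𝒞 ∧ A ∩ (E ∩ F) = G ∩ H := by
  have hEF : (E ∩ F).Nonempty := hne.mono Set.inter_subset_right
  rcases rel_cases hEF with h | h | h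
  · exact ⟨A, E, hA, hE, by rw [Set.inter_eq_left.mpr h]⟩
  · exact ⟨A, F, hA, hF, by rw [Set.inter_eq_right.mpr h]⟩
  · rcases value_comparable hL hE hF hA h with hc | hc | hc
    · exact ⟨E, F, hE, hF, Set.inter_eq_right.mpr hc⟩
    · exact ⟨A, A, hA, hA, by rw [Set.inter_eq_left.mpr hc, Set.inter_self]⟩
    · exact absurd (Set.inter_comm A (E ∩ F) ▸ hc) (Set.nonempty_iff_ne_empty.mp hne)

lemma pair_rep [Finite X] {𝒞 : Set (Set X)} (hL : PropertyL 𝒞) {A : Set X}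
    (hA : A ∈ interClosure 𝒞) : ∃ E F, E ∈ 𝒞 ∧ F ∈ 𝒞 ∧ A = E ∩ F := by
  obtain ⟨hAne, S, hS𝒞, hSne, rfl⟩ := hA
  have hfin : S.Finite := Set.toFinite S
  revert hS𝒞 hSne hAne
  refine Set.Finite.induction_on (motive := fun S _ => S ⊆ 𝒞 → S.Nonempty → (⋂₀ S).Nonempty →
    ∃ E F, E ∈ 𝒞 ∧ F ∈ 𝒞 ∧ ⋂₀ S = E ∩ F) S hfin ?_ ?_
  · intro _ h
    exact absurd h (by simp [Set.not_nonempty_empty])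
  · intro a s ha hs IH hS𝒞 _ hAne
    rw [Set.sInter_insert] at hAne ⊢
    have has : a ∈ 𝒞 := hS𝒞 (Set.mem_insert a s)
    have hs𝒞 : s ⊆ 𝒞 := fun x hx => hS𝒞 (Set.mem_insert_of_mem a hx)
    rcases Set.eq_empty_or_nonempty s with rfl | hsne
    · exact ⟨a, a, has, has, by simp⟩
    · have hsint : (⋂₀ s).Nonempty := hAne.mono Set.inter_subset_right
      obtain ⟨E, F, hE, hF, hrep⟩ := IH hs𝒞 hsne hsint
      rw [hrep] at hAne ⊢
      obtain ⟨G, H, hG, hH, hGH⟩ := triple_to_pair hL has hE hF hAne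
      exact ⟨G, H, hG, hH, hGH⟩

/-- Property (L) transfers to the intersection closure. -/
lemma propertyL_interClosure [Finite X] {𝒞 : Set (Set X)} (hL : PropertyL 𝒞) :
    PropertyL (interClosure 𝒞) := by
  intro C1 h1 C2 h2 C3 h3 h12 h13
  obtain ⟨A, B, hA, hB, rfl⟩ := pair_rep hL h1
  obtain ⟨E, F, hE, hF, rfl⟩ := pair_rep hL h2
  obtain ⟨G, H, hG, hH, rfl⟩ := pair_rep hL h3
  -- A ∩ B is not an overlap value
  have hAB : A ⊆ B ∨ B ⊆ A := by
    have hABne : (A ∩ B).Nonempty := h12.1.mono Set.inter_subset_left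
    rcases rel_cases hABne with h | h | h
    · exact Or.inl h
    · exact Or.inr h
    · exact absurd h12 (value_not_overlap_pair hL hA hB hE hF h)
  have hC1 : A ∩ B ∈ 𝒞 := by
    rcases hAB with h | h
    · rwa [Set.inter_eq_left.mpr h]
    · rwa [Set.inter_eq_right.mpr h]
  have hC2 : E ∩ F ∈ 𝒞 := by
    have hne : (E ∩ F).Nonempty := h12.1.mono Set.inter_subset_right
    rcases rel_cases hne with h | h | h
    · rwa [Set.inter_eq_left.mpr h]
    · rwa [Set.inter_eq_right.mpr h]
    · exfalso
      have := value_not_overlap_pair hL hE hF hC1 hC1 h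
      rw [Set.inter_self] at this
      exact this (overlap_symm h12)
  have hC3 : G ∩ H ∈ 𝒞 := by
    have hne : (G ∩ H).Nonempty := h13.1.mono Set.inter_subset_right
    rcases rel_cases hne with h | h | h
    · rwa [Set.inter_eq_left.mpr h]
    · rwa [Set.inter_eq_right.mpr h]
    · exfalso
      have := value_not_overlap_pair hL hG hH hC1 hC1 h
      rw [Set.inter_self] at this
      exact this (overlap_symm h13)
  exact hL _ hC1 _ hC2 _ hC3 h12 h13

namespace Network

lemma E_irrefl (N : Network X) (v : N.V) : ¬ N.E v v :=
  fun h => N.acyclic v v h Relation.ReflTransGen.refl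

lemma reach_refl (N : Network X) (v : N.V) : N.reach v v := Relation.ReflTransGen.refl

lemma reach_trans {N : Network X} {u v w : N.V} (h1 : N.reach u v) (h2 : N.reach v w) :
    N.reach u w := Relation.ReflTransGen.trans h1 h2

lemma reach_of_E {N : Network X} {u v : N.V} (h : N.E u v) : N.reach u v :=
  Relation.ReflTransGen.single h

lemma reach_antisymm {N : Network X} {u v : N.V} (h1 : N.reach u v) (h2 : N.reach v u) :
    u = v := by
  rcases Relation.ReflTransGen.cases_head h1 with h | ⟨c, hc, hcv⟩
  · exact h
  · exact absurd (Relation.ReflTransGen.trans hcv h2) (N.acyclic u c hc)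

lemma E_ne {N : Network X} {u v : N.V} (h : N.E u v) : u ≠ v := by
  rintro rfl; exact E_irrefl N _ h

lemma cluster_mono {N : Network X} {u v : N.V} (h : N.reach u v) :
    N.cluster v ⊆ N.cluster u := fun _ hx => reach_trans h hx

/-- The inductive predicate: `l` is (the vertex list of) a directed path from `a` to `b`. -/
inductive DP (N : Network X) : N.V → N.V → List N.V → Prop
  | single (a : N.V) : DP N a a [a]
  | cons {a b c : N.V} {l : List N.V} (h : N.E a b) (hd : DP N b c l) : DP N a c (a :: l)

namespace DP

variable {N : Network X}

lemma ne_nil {a b : N.V} {l : List N.V} (h : DP N a b l) : l ≠ [] := by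
  cases h <;> simp

lemma head_mem {a b : N.V} {l : List N.V} (h : DP N a b l) : a ∈ l := by
  cases h <;> simp

lemma exists_cons {a b : N.V} {l : List N.V} (h : DP N a b l) : ∃ t, l = a :: t := by
  cases h <;> exact ⟨_, rfl⟩

lemma last_mem {a b : N.V} {l : List N.V} (h : DP N a b l) : b ∈ l := by
  induction h with
  | single a => simp
  | cons h hd IH => exact List.mem_cons_of_mem _ IH

lemma reach_ab {a b : N.V} {l : List N.V} (h : DP N a b l) : N.reach a b := by
  induction h with
  | single a => exact reach_refl N a
  | cons h hd IH => exact reach_trans (reach_of_E h) IH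

lemma reach_head {a b : N.V} {l : List N.V} (h : DP N a b l) {t : N.V} (ht : t ∈ l) :
    N.reach a t := by
  induction h with
  | single a =>
      obtain rfl : t = a := List.mem_singleton.mp ht
      exact reach_refl N t
  | cons h hd IH =>
      rcases List.mem_cons.mp ht with rfl | ht'
      · exact reach_refl N t
      · exact reach_trans (reach_of_E h) (IH ht')

lemma reach_last {a b : N.V} {l : List N.V} (h : DP N a b l) {t : N.V} (ht : t ∈ l) :
    N.reach t b := by
  induction h with
  | single a =>
      obtain rfl : t = a := List.mem_singleton.mp ht
      exact reach_refl N t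
  | cons h hd IH =>
      rcases List.mem_cons.mp ht with rfl | ht'
      · exact reach_trans (reach_of_E h) hd.reach_ab
      · exact IH ht'

lemma nodup {a b : N.V} {l : List N.V} (h : DP N a b l) : l.Nodup := by
  induction h with
  | single a => simp
  | cons h hd IH =>
      refine List.nodup_cons.mpr ⟨fun hmem => ?_, IH⟩
      exact N.acyclic _ _ h (hd.reach_head hmem)

lemma append {a b c : N.V} {l m : List N.V} (h1 : DP N a b l) (h2 : DP N b c m) :
    DP N a c (l ++ m.tail) := by
  induction h1 with
  | single a =>
      cases h2 with
      | single _ => simpa using DP.single _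
      | cons h hd => simpa using DP.cons h hd
  | cons h hd IH => exact DP.cons h (IH h2)

lemma of_reach {a b : N.V} (h : N.reach a b) : ∃ l, DP N a b l := by
  induction h using Relation.ReflTransGen.head_induction_on with
  | refl => exact ⟨[b], DP.single b⟩
  | head h _ IH => obtain ⟨l, hl⟩ := IH; exact ⟨_, DP.cons h hl⟩

lemma split {a b : N.V} {l : List N.V} (h : DP N a b l) {t : N.V} (ht : t ∈ l) :
    ∃ l₁ l₂, DP N a t l₁ ∧ DP N t b l₂ ∧ l = l₁ ++ l₂.tail := by
  induction h with
  | single a =>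
      obtain rfl : t = a := List.mem_singleton.mp ht
      exact ⟨[t], [t], DP.single t, DP.single t, rfl⟩
  | @cons a b' c l h hd IH =>
      rcases List.mem_cons.mp ht with rfl | ht'
      · exact ⟨[t], t :: l, DP.single t, DP.cons h hd, rfl⟩
      · obtain ⟨l₁, l₂, h₁, h₂, heq⟩ := IH ht'
        exact ⟨a :: l₁, l₂, DP.cons h h₁, h₂, by rw [heq]; rfl⟩

/-- extract the suffix after the last vertex belonging to `S`. -/
lemma last_suffix {a b : N.V} {l : List N.V} (h : DP N a b l) (S : Set N.V)
    (hS : ∃ t ∈ l, t ∈ S) :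
    ∃ c ∈ S, ∃ l₁ l₂, DP N a c l₁ ∧ DP N c b l₂ ∧ l = l₁ ++ l₂.tail ∧
      ∀ t ∈ l₂, t ∈ S → t = c := by
  induction h with
  | single a =>
      obtain ⟨t, ht, htS⟩ := hS
      obtain rfl : t = a := List.mem_singleton.mp ht
      exact ⟨t, htS, [t], [t], DP.single t, DP.single t, rfl, by simp⟩
  | @cons a b' c l h hd IH =>
      by_cases h' : ∃ t ∈ l, t ∈ S
      · obtain ⟨d, hdS, l₁, l₂, h₁, h₂, heq, hprop⟩ := IH h'
        exact ⟨d, hdS, a :: l₁, l₂, DP.cons h h₁, h₂, by rw [heq]; rfl, hprop⟩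
      · obtain ⟨t, ht, htS⟩ := hS
        have hta : t = a := by
          rcases List.mem_cons.mp ht with rfl | htl
          · rfl
          · exact absurd ⟨t, htl, htS⟩ h'
        subst hta
        refine ⟨t, htS, [t], t :: l, DP.single t, DP.cons h hd, rfl, ?_⟩
        intro x hx hxS
        rcases List.mem_cons.mp hx with rfl | hxl
        · rfl
        · exact absurd ⟨x, hxl, hxS⟩ h'

lemma penult {a b : N.V} {l : List N.V} (h : DP N a b l) (hne : a ≠ b) :
    ∃ p ∈ l, N.E p b := by
  induction h with
  | single a => exact absurd rfl hne
  | @cons a b' c l h hd IH =>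
      cases hd with
      | single _ => exact ⟨a, by simp, h⟩
      | @cons _ b'' _ l' h' hd' =>
          have hb'c : b' ≠ c := by
            rintro rfl
            exact N.acyclic b' b'' h' (reach_last hd' hd'.head_mem)
          obtain ⟨p, hp, hpE⟩ := IH hb'c
          exact ⟨p, List.mem_cons_of_mem _ hp, hpE⟩

lemma mem_comparable {a b : N.V} {l : List N.V} (h : DP N a b l) {t t' : N.V}
    (ht : t ∈ l) (ht' : t' ∈ l) : N.reach t t' ∨ N.reach t' t := by
  obtain ⟨l₁, l₂, h₁, h₂, heq⟩ := h.split ht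
  subst heq
  rcases List.mem_append.mp ht' with h' | h'
  · exact Or.inr (h₁.reach_last h')
  · have : t' ∈ l₂ := by
      obtain ⟨s, rfl⟩ := h₂.exists_cons
      exact List.mem_cons_of_mem _ h'
    exact Or.inl (h₂.reach_head this)

/-- from `t ∈ l`, `z ∈ l`, `t ≠ z`, we get a path from `a` to `t` or from `t` to `b`
avoiding `z`. -/
lemma avoid_split {a b : N.V} {l : List N.V} (h : DP N a b l) {t z : N.V}
    (ht : t ∈ l) (hz : z ∈ l) (hne : t ≠ z) :
    (∃ m, DP N a t m ∧ (∀ x ∈ m, x ∈ l) ∧ z ∉ m) ∨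
    (∃ m, DP N t b m ∧ (∀ x ∈ m, x ∈ l) ∧ z ∉ m) := by
  obtain ⟨l₁, l₂, h₁, h₂, heq⟩ := h.split hz
  obtain ⟨s, rfl⟩ := h₂.exists_cons
  rcases List.mem_append.mp (heq ▸ ht) with h' | h'
  · -- t ∈ l₁ : split l₁ at t, the prefix avoids z
    left
    obtain ⟨m₁, m₂, hm₁, hm₂, heq2⟩ := h₁.split h'
    obtain ⟨s₂, rfl⟩ := hm₂.exists_cons
    refine ⟨m₁, hm₁, fun x hx => heq ▸ List.mem_append_left _ (heq2 ▸ List.mem_append_left _ hx), ?_⟩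
    intro hzm
    have hz2 : z ∈ t :: s₂ := hm₂.last_mem
    rcases List.mem_cons.mp hz2 with h2 | h2
    · exact hne h2.symm
    · have hl₁nd : (m₁ ++ (t :: s₂).tail).Nodup := heq2 ▸ h₁.nodup
      exact List.disjoint_of_nodup_append hl₁nd hzm h2
  · -- t ∈ s = l₂.tail
    right
    have htl₂ : t ∈ z :: s := List.mem_cons_of_mem _ h'
    obtain ⟨m₁, m₂, hm₁, hm₂, heq2⟩ := h₂.split htl₂
    obtain ⟨s₁, hs₁⟩ := hm₁.exists_cons
    obtain ⟨s₂, rfl⟩ := hm₂.exists_cons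
    have hs : s = s₁ ++ s₂ := by
      have h5 : z :: s = z :: (s₁ ++ s₂) := by rw [heq2, hs₁]; rfl
      exact (List.cons_eq_cons.mp h5).2
    have hznds : z ∉ s := (List.nodup_cons.mp h₂.nodup).1
    have hznm : z ∉ t :: s₂ := by
      intro hzm
      rcases List.mem_cons.mp hzm with h2 | h2
      · exact hne h2.symm
      · exact hznds (hs ▸ List.mem_append_right _ h2)
    refine ⟨t :: s₂, hm₂, ?_, hznm⟩
    intro x hx
    rcases List.mem_cons.mp hx with rfl | hx'
    · exact ht
    · exact heq ▸ List.mem_append_right _ (hs ▸ List.mem_append_right _ hx')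

end DP

end Network
namespace Network

variable {N : Network X}

lemma UG_adj_of_E {u v : N.V} (h : N.E u v) : N.UG.Adj u v := ⟨E_ne h, Or.inl h⟩

lemma isHybrid_of_parents {p q v : N.V} (h1 : N.E p v) (h2 : N.E q v) (hpq : p ≠ q) :
    N.IsHybrid v := by
  have : 1 < {u | N.E u v}.ncard := by
    rw [Set.one_lt_ncard_iff (Set.toFinite _)]
    exact ⟨p, q, h1, h2, hpq⟩
  exact this

/-- connectivity within an induced subgraph, without dependent subtype juggling. -/
def conn (N : Network X) (s : Set N.V) (u v : N.V) : Prop :=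
  ∃ (hu : u ∈ s) (hv : v ∈ s), (N.UG.induce s).Reachable ⟨u, hu⟩ ⟨v, hv⟩

lemma conn.symm {s : Set N.V} {u v : N.V} (h : conn N s u v) : conn N s v u := by
  obtain ⟨hu, hv, hr⟩ := h
  exact ⟨hv, hu, hr.symm⟩

lemma conn.trans {s : Set N.V} {u v w : N.V} (h1 : conn N s u v) (h2 : conn N s v w) :
    conn N s u w := by
  obtain ⟨hu, hv, hr⟩ := h1
  obtain ⟨hv', hw, hr'⟩ := h2
  exact ⟨hu, hw, hr.trans (by convert hr')⟩

lemma conn_refl {s : Set N.V} {u : N.V} (hu : u ∈ s) : conn N s u u :=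
  ⟨hu, hu, SimpleGraph.Reachable.refl _⟩

lemma conn_of_adj {s : Set N.V} {u v : N.V} (hu : u ∈ s) (hv : v ∈ s)
    (h : N.UG.Adj u v) : conn N s u v :=
  ⟨hu, hv, SimpleGraph.Adj.reachable (by exact h)⟩

lemma conn_of_DP {s : Set N.V} {a b : N.V} {l : List N.V} (h : DP N a b l)
    (hsub : ∀ x ∈ l, x ∈ s) : conn N s a b := by
  induction h with
  | single a => exact conn_refl (hsub a (by simp))
  | @cons a b' c l h hd IH =>
      refine (conn_of_adj (hsub a (by simp)) (hsub b' (List.mem_cons_of_mem _ hd.head_mem))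
        (UG_adj_of_E h)).trans (IH ?_)
      intro x hx
      exact hsub x (List.mem_cons_of_mem _ hx)

lemma preconnected_of_conn {s : Set N.V} (h : ∀ u ∈ s, ∀ v ∈ s, conn N s u v) :
    (N.UG.induce s).Preconnected := by
  rintro ⟨u, hu⟩ ⟨v, hv⟩
  obtain ⟨hu', hv', hr⟩ := h u hu v hv
  convert hr

lemma connected_of_conn {s : Set N.V} (hne : s.Nonempty)
    (h : ∀ u ∈ s, ∀ v ∈ s, conn N s u v) : (N.UG.induce s).Connected := by
  rw [SimpleGraph.connected_iff]
  exact ⟨preconnected_of_conn h, ⟨⟨hne.choose, hne.choose_spec⟩⟩⟩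

/-- reachability in an induced graph preserves predicates closed under adjacency. -/
lemma preconnected_invariant {s : Set N.V} (hpre : (N.UG.induce s).Preconnected)
    (P : N.V → Prop)
    (hcl : ∀ u v : N.V, u ∈ s → v ∈ s → N.UG.Adj u v → P u → P v)
    {a b : N.V} (ha : a ∈ s) (hb : b ∈ s) (hPa : P a) : P b := by
  obtain ⟨w⟩ := hpre ⟨a, ha⟩ ⟨b, hb⟩
  have : ∀ (x y : ↥s) (_ : (N.UG.induce s).Walk x y), P x.1 → P y.1 := by
    intro x y w
    induction w with
    | nil => exact id
    | @cons x' y' z' hadj w IH =>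
        intro hP
        exact IH (hcl x'.1 y'.1 x'.2 y'.2 (by exact hadj) hP)
  exact this _ _ w hPa

/-- conn to one endpoint of an arc, with one vertex deleted -/
lemma conn_arc_del {s : Set N.V} {p q : N.V} {l : List N.V} (h : DP N p q l)
    (hsub : ∀ x ∈ l, x ∈ s) (z₀ : N.V) {t : N.V} (ht : t ∈ l) (htz : t ≠ z₀) :
    conn N (s \ {z₀}) t p ∨ conn N (s \ {z₀}) t q := by
  by_cases hz : z₀ ∈ l
  · rcases h.avoid_split ht hz htz with ⟨m, hm, hmsub, hmz⟩ | ⟨m, hm, hmsub, hmz⟩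
    · left
      refine (conn_of_DP hm ?_).symm
      intro x hx
      exact ⟨hsub x (hmsub x hx), fun hxx => hmz (hxx ▸ hx)⟩
    · right
      refine conn_of_DP hm ?_
      intro x hx
      exact ⟨hsub x (hmsub x hx), fun hxx => hmz (hxx ▸ hx)⟩
  · obtain ⟨l₁, l₂, h₁, h₂, heq⟩ := h.split ht
    left
    refine (conn_of_DP h₁ ?_).symm
    intro x hx
    have hxl : x ∈ l := heq ▸ List.mem_append_left _ hx
    exact ⟨hsub x hxl, fun hxx => hz (hxx ▸ hxl)⟩

lemma conn_arc {s : Set N.V} {p q : N.V} {l : List N.V} (h : DP N p q l)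
    (hsub : ∀ x ∈ l, x ∈ s) {t : N.V} (ht : t ∈ l) :
    conn N s t p ∧ conn N s t q := by
  obtain ⟨l₁, l₂, h₁, h₂, heq⟩ := h.split ht
  constructor
  · refine (conn_of_DP h₁ ?_).symm
    intro x hx
    exact hsub x (heq ▸ List.mem_append_left _ hx)
  · refine conn_of_DP h₂ ?_
    intro x hx
    obtain ⟨s', rfl⟩ := h₂.exists_cons
    rcases List.mem_cons.mp hx with rfl | hx'
    · exact hsub x ht
    · exact hsub x (heq ▸ List.mem_append_right _ hx')

end Network
namespace Network

variable {N : Network X}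

lemma not_conn_del {s : Set N.V} {t z₀ : N.V} : ¬ conn N (s \ {z₀}) t z₀ :=
  fun ⟨_, hv, _⟩ => hv.2 rfl

lemma conn_del_of_DP {s : Set N.V} {z₀ p q : N.V} {l : List N.V} (h : DP N p q l)
    (hsub : ∀ x ∈ l, x ∈ s) (hz : z₀ ∉ l) : conn N (s \ {z₀}) p q :=
  conn_of_DP h (fun x hx => ⟨hsub x hx, fun hxx => hz (hxx ▸ hx)⟩)

lemma necklace2_biconn {c z : N.V} {l1 l2 : List N.V} (h1 : DP N c z l1) (h2 : DP N c z l2)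
    (hcz : c ≠ z) (hint : ∀ x, x ∈ l1 → x ∈ l2 → x = c ∨ x = z) :
    N.IsBiconn {x | x ∈ l1 ∨ x ∈ l2} := by
  set s : Set N.V := {x | x ∈ l1 ∨ x ∈ l2} with hs
  have hsub1 : ∀ x ∈ l1, x ∈ s := fun x hx => Or.inl hx
  have hsub2 : ∀ x ∈ l2, x ∈ s := fun x hx => Or.inr hx
  have hcs : c ∈ s := hsub1 c h1.head_mem
  have hzs : z ∈ s := hsub1 z h1.last_mem
  constructor
  · refine connected_of_conn ⟨c, hcs⟩ ?_
    intro u hu v hv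
    have key : ∀ t ∈ s, conn N s t c := by
      intro t ht
      rcases ht with ht | ht
      · exact (conn_arc h1 hsub1 ht).1
      · exact (conn_arc h2 hsub2 ht).1
    exact (key u hu).trans (key v hv).symm
  · intro z₀ hz₀
    have main : ∃ hub, hub ∈ s \ {z₀} ∧ ∀ t ∈ s \ {z₀}, conn N (s \ {z₀}) t hub := by
      by_cases hc : z₀ = c
      · subst hc
        refine ⟨z, ⟨hzs, fun h => hcz (by simpa using h.symm)⟩, ?_⟩
        intro t ht
        have htz : t ≠ z₀ := fun h => ht.2 (by simp [h])
        rcases ht.1 with htl | htl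
        · exact (conn_arc_del h1 hsub1 z₀ htl htz).resolve_left not_conn_del
        · exact (conn_arc_del h2 hsub2 z₀ htl htz).resolve_left not_conn_del
      by_cases hz : z₀ = z
      · subst hz
        refine ⟨c, ⟨hcs, by simpa using hcz⟩, ?_⟩
        intro t ht
        have htz : t ≠ z₀ := fun h => ht.2 (by simp [h])
        rcases ht.1 with htl | htl
        · exact (conn_arc_del h1 hsub1 z₀ htl htz).resolve_right not_conn_del
        · exact (conn_arc_del h2 hsub2 z₀ htl htz).resolve_right not_conn_del
      · -- z₀ is interior to at most one of the two arcs
        have hconn_cz : conn N (s \ {z₀}) c z := by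
          by_cases hm : z₀ ∈ l1
          · have hm2 : z₀ ∉ l2 := by
              intro hm2
              rcases hint z₀ hm hm2 with h | h
              · exact hc h
              · exact hz h
            exact conn_del_of_DP h2 hsub2 hm2
          · exact conn_del_of_DP h1 hsub1 hm
        refine ⟨c, ⟨hcs, by simpa using (fun h => hc h.symm : c ≠ z₀)⟩, ?_⟩
        intro t ht
        have htz : t ≠ z₀ := fun h => ht.2 (by simp [h])
        rcases ht.1 with htl | htl
        · rcases conn_arc_del h1 hsub1 z₀ htl htz with h | h
          · exact h
          · exact h.trans hconn_cz.symm
        · rcases conn_arc_del h2 hsub2 z₀ htl htz with h | h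
          · exact h
          · exact h.trans hconn_cz.symm
    obtain ⟨hub, hhub, hkey⟩ := main
    exact preconnected_of_conn (fun u hu v hv => (hkey u hu).trans (hkey v hv).symm)

end Network
namespace Network

variable {N : Network X}

lemma necklace4_biconn {m n z1 z2 : N.V} {a1 b1 b2 a2 : List N.V}
    (hA1 : DP N m z1 a1) (hB1 : DP N n z1 b1) (hB2 : DP N n z2 b2) (hA2 : DP N m z2 a2)
    (hA1B1 : ∀ x, x ∈ a1 → x ∈ b1 → x = z1)
    (hA2B2 : ∀ x, x ∈ a2 → x ∈ b2 → x = z2)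
    (hA1B2 : ∀ x, x ∈ a1 → x ∈ b2 → False)
    (hA2B1 : ∀ x, x ∈ a2 → x ∈ b1 → False)
    (hA1A2 : ∀ x, x ∈ a1 → x ∈ a2 → x = m)
    (hB1B2 : ∀ x, x ∈ b1 → x ∈ b2 → x = n) :
    N.IsBiconn {x | x ∈ a1 ∨ x ∈ b1 ∨ x ∈ b2 ∨ x ∈ a2} := by
  set s : Set N.V := {x | x ∈ a1 ∨ x ∈ b1 ∨ x ∈ b2 ∨ x ∈ a2} with hs
  have hsubA1 : ∀ x ∈ a1, x ∈ s := fun x hx => Or.inl hx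
  have hsubB1 : ∀ x ∈ b1, x ∈ s := fun x hx => Or.inr (Or.inl hx)
  have hsubB2 : ∀ x ∈ b2, x ∈ s := fun x hx => Or.inr (Or.inr (Or.inl hx))
  have hsubA2 : ∀ x ∈ a2, x ∈ s := fun x hx => Or.inr (Or.inr (Or.inr hx))
  have hms : m ∈ s := hsubA1 m hA1.head_mem
  have hns : n ∈ s := hsubB1 n hB1.head_mem
  have hz1s : z1 ∈ s := hsubA1 z1 hA1.last_mem
  have hz2s : z2 ∈ s := hsubA2 z2 hA2.last_mem
  -- junction distinctness
  have hmz1 : m ≠ z1 := fun h => hA2B1 m hA2.head_mem (h ▸ hB1.last_mem)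
  have hmz2 : m ≠ z2 := fun h => hA1B2 m hA1.head_mem (h ▸ hB2.last_mem)
  have hnz1 : n ≠ z1 := fun h => hA1B2 n (h ▸ hA1.last_mem) hB2.head_mem
  have hnz2 : n ≠ z2 := fun h => hA2B1 n (h ▸ hA2.last_mem) hB1.head_mem
  have hmn : m ≠ n := fun h => hmz1 (hA1B1 m hA1.head_mem (h ▸ hB1.head_mem))
  have hz12 : z1 ≠ z2 := fun h => hA1B2 z1 hA1.last_mem (h ▸ hB2.last_mem)
  -- non-memberships
  have hz1a2 : z1 ∉ a2 := fun h => hmz1 (hA1A2 z1 hA1.last_mem h).symm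
  have hz1b2 : z1 ∉ b2 := fun h => hA1B2 z1 hA1.last_mem h
  have hz2a1 : z2 ∉ a1 := fun h => hA1B2 z2 h hB2.last_mem
  have hz2b1 : z2 ∉ b1 := fun h => hA2B1 z2 hA2.last_mem h
  have hmb1 : m ∉ b1 := fun h => hmz1 (hA1B1 m hA1.head_mem h)
  have hmb2 : m ∉ b2 := fun h => hA1B2 m hA1.head_mem h
  have hna1 : n ∉ a1 := fun h => hnz1 (hA1B1 n h hB1.head_mem)
  have hna2 : n ∉ a2 := fun h => hA2B1 n h hB1.head_mem
  constructor
  · refine connected_of_conn ⟨m, hms⟩ ?_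
    intro u hu v hv
    have hnm : conn N s n m :=
      (conn_of_DP hB1 hsubB1).trans ((conn_arc hA1 hsubA1 hA1.last_mem).1)
    have key : ∀ t ∈ s, conn N s t m := by
      intro t ht
      rcases ht with ht | ht | ht | ht
      · exact (conn_arc hA1 hsubA1 ht).1
      · exact (conn_arc hB1 hsubB1 ht).1.trans hnm
      · exact (conn_arc hB2 hsubB2 ht).1.trans hnm
      · exact (conn_arc hA2 hsubA2 ht).1
    exact (key u hu).trans (key v hv).symm
  · intro z₀ hz₀s
    have main : ∃ hub, hub ∈ s \ {z₀} ∧ ∀ t ∈ s \ {z₀}, conn N (s \ {z₀}) t hub := by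
      have hmem : ∀ {x : N.V}, x ∈ s → x ≠ z₀ → x ∈ s \ {z₀} :=
        fun hx hne => ⟨hx, fun h => hne (by simpa using h)⟩
      by_cases h01 : z₀ = z1
      · subst h01
        -- live arcs: A2, B2; hub m
        have hlA2 : conn N (s \ {z₀}) m z2 := conn_del_of_DP hA2 hsubA2 hz1a2
        have hlB2 : conn N (s \ {z₀}) n z2 := conn_del_of_DP hB2 hsubB2 hz1b2
        refine ⟨m, hmem hms hmz1, ?_⟩
        intro t ht
        have htz : t ≠ z₀ := fun h => ht.2 (by simp [h])
        rcases ht.1 with htl | htl | htl | htl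
        · exact (conn_arc_del hA1 hsubA1 z₀ htl htz).resolve_right not_conn_del
        · exact ((conn_arc_del hB1 hsubB1 z₀ htl htz).resolve_right not_conn_del).trans
            (hlB2.trans hlA2.symm)
        · rcases conn_arc_del hB2 hsubB2 z₀ htl htz with h | h
          · exact h.trans (hlB2.trans hlA2.symm)
          · exact h.trans hlA2.symm
        · rcases conn_arc_del hA2 hsubA2 z₀ htl htz with h | h
          · exact h
          · exact h.trans hlA2.symm
      by_cases h02 : z₀ = z2
      · subst h02
        -- live arcs: A1, B1; hub m
        have hlA1 : conn N (s \ {z₀}) m z1 := conn_del_of_DP hA1 hsubA1 hz2a1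
        have hlB1 : conn N (s \ {z₀}) n z1 := conn_del_of_DP hB1 hsubB1 hz2b1
        refine ⟨m, hmem hms hmz2, ?_⟩
        intro t ht
        have htz : t ≠ z₀ := fun h => ht.2 (by simp [h])
        rcases ht.1 with htl | htl | htl | htl
        · rcases conn_arc_del hA1 hsubA1 z₀ htl htz with h | h
          · exact h
          · exact h.trans hlA1.symm
        · rcases conn_arc_del hB1 hsubB1 z₀ htl htz with h | h
          · exact h.trans (hlB1.trans hlA1.symm)
          · exact h.trans hlA1.symm
        · exact ((conn_arc_del hB2 hsubB2 z₀ htl htz).resolve_right not_conn_del).trans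
            (hlB1.trans hlA1.symm)
        · exact (conn_arc_del hA2 hsubA2 z₀ htl htz).resolve_right not_conn_del
      by_cases h0m : z₀ = m
      · subst h0m
        -- live arcs: B1, B2; hub n
        have hlB1 : conn N (s \ {z₀}) n z1 := conn_del_of_DP hB1 hsubB1 hmb1
        have hlB2 : conn N (s \ {z₀}) n z2 := conn_del_of_DP hB2 hsubB2 hmb2
        refine ⟨n, hmem hns (Ne.symm hmn), ?_⟩
        intro t ht
        have htz : t ≠ z₀ := fun h => ht.2 (by simp [h])
        rcases ht.1 with htl | htl | htl | htl
        · exact ((conn_arc_del hA1 hsubA1 z₀ htl htz).resolve_left not_conn_del).trans hlB1.symm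
        · rcases conn_arc_del hB1 hsubB1 z₀ htl htz with h | h
          · exact h
          · exact h.trans hlB1.symm
        · rcases conn_arc_del hB2 hsubB2 z₀ htl htz with h | h
          · exact h
          · exact h.trans hlB2.symm
        · exact ((conn_arc_del hA2 hsubA2 z₀ htl htz).resolve_left not_conn_del).trans hlB2.symm
      by_cases h0n : z₀ = n
      · subst h0n
        -- live arcs: A1, A2; hub m
        have hlA1 : conn N (s \ {z₀}) m z1 := conn_del_of_DP hA1 hsubA1 hna1
        have hlA2 : conn N (s \ {z₀}) m z2 := conn_del_of_DP hA2 hsubA2 hna2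
        refine ⟨m, hmem hms hmn, ?_⟩
        intro t ht
        have htz : t ≠ z₀ := fun h => ht.2 (by simp [h])
        rcases ht.1 with htl | htl | htl | htl
        · rcases conn_arc_del hA1 hsubA1 z₀ htl htz with h | h
          · exact h
          · exact h.trans hlA1.symm
        · exact ((conn_arc_del hB1 hsubB1 z₀ htl htz).resolve_left not_conn_del).trans hlA1.symm
        · exact ((conn_arc_del hB2 hsubB2 z₀ htl htz).resolve_left not_conn_del).trans hlA2.symm
        · rcases conn_arc_del hA2 hsubA2 z₀ htl htz with h | h
          · exact h
          · exact h.trans hlA2.symm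
      · -- z₀ is not a junction : it lies in at most one arc interior
        have hin : (z₀ ∉ a1 ∨ z₀ ∉ b1) ∧ (z₀ ∉ a1 ∨ z₀ ∉ b2) ∧ (z₀ ∉ a1 ∨ z₀ ∉ a2) ∧
            (z₀ ∉ b1 ∨ z₀ ∉ b2) ∧ (z₀ ∉ b1 ∨ z₀ ∉ a2) ∧ (z₀ ∉ b2 ∨ z₀ ∉ a2) := by
          refine ⟨?_, ?_, ?_, ?_, ?_, ?_⟩
          · by_contra h; push_neg at h; exact h01 (hA1B1 z₀ h.1 h.2)
          · by_contra h; push_neg at h; exact hA1B2 z₀ h.1 h.2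
          · by_contra h; push_neg at h; exact h0m (hA1A2 z₀ h.1 h.2)
          · by_contra h; push_neg at h; exact h0n (hB1B2 z₀ h.1 h.2)
          · by_contra h; push_neg at h; exact hA2B1 z₀ h.2 h.1
          · by_contra h; push_neg at h; exact h02 (hA2B2 z₀ h.2 h.1)
        obtain ⟨h1', h2', h3', h4', h5', h6'⟩ := hin
        -- connect all junctions in s \ {z₀}
        have hjunc : conn N (s \ {z₀}) m z1 ∧ conn N (s \ {z₀}) m z2 ∧
            conn N (s \ {z₀}) m n := by
          by_cases hza1 : z₀ ∈ a1
          · have hb1 : z₀ ∉ b1 := h1'.resolve_left (fun h => h hza1)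
            have hb2 : z₀ ∉ b2 := h2'.resolve_left (fun h => h hza1)
            have ha2 : z₀ ∉ a2 := h3'.resolve_left (fun h => h hza1)
            have lB1 := conn_del_of_DP hB1 hsubB1 hb1
            have lB2 := conn_del_of_DP hB2 hsubB2 hb2
            have lA2 := conn_del_of_DP hA2 hsubA2 ha2
            exact ⟨lA2.trans (lB2.symm.trans lB1), lA2, lA2.trans lB2.symm⟩
          · have lA1 := conn_del_of_DP hA1 hsubA1 hza1
            by_cases hzb1 : z₀ ∈ b1
            · have hb2 : z₀ ∉ b2 := h4'.resolve_left (fun h => h hzb1)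
              have ha2 : z₀ ∉ a2 := h5'.resolve_left (fun h => h hzb1)
              have lB2 := conn_del_of_DP hB2 hsubB2 hb2
              have lA2 := conn_del_of_DP hA2 hsubA2 ha2
              exact ⟨lA1, lA2, lA2.trans lB2.symm⟩
            · have lB1 := conn_del_of_DP hB1 hsubB1 hzb1
              by_cases hzb2 : z₀ ∈ b2
              · have ha2 : z₀ ∉ a2 := h6'.resolve_left (fun h => h hzb2)
                have lA2 := conn_del_of_DP hA2 hsubA2 ha2
                exact ⟨lA1, lA2, lA1.trans lB1.symm⟩
              · have lB2 := conn_del_of_DP hB2 hsubB2 hzb2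
                exact ⟨lA1, lA1.trans (lB1.symm.trans lB2), lA1.trans lB1.symm⟩
        obtain ⟨hj1, hj2, hjn⟩ := hjunc
        refine ⟨m, hmem hms (fun h => h0m h.symm), ?_⟩
        intro t ht
        have htz : t ≠ z₀ := fun h => ht.2 (by simp [h])
        rcases ht.1 with htl | htl | htl | htl
        · rcases conn_arc_del hA1 hsubA1 z₀ htl htz with h | h
          · exact h
          · exact h.trans hj1.symm
        · rcases conn_arc_del hB1 hsubB1 z₀ htl htz with h | h
          · exact h.trans hjn.symm
          · exact h.trans hj1.symm
        · rcases conn_arc_del hB2 hsubB2 z₀ htl htz with h | h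
          · exact h.trans hjn.symm
          · exact h.trans hj2.symm
        · rcases conn_arc_del hA2 hsubA2 z₀ htl htz with h | h
          · exact h
          · exact h.trans hj2.symm
    obtain ⟨hub, hhub, hkey⟩ := main
    exact preconnected_of_conn (fun u hu v hv => (hkey u hu).trans (hkey v hv).symm)

end Network
namespace Network

variable {N : Network X}

lemma exists_block_superset {V₀ : Set N.V} (hV : N.IsBiconn V₀) :
    ∃ B, N.IsBlock B ∧ V₀ ⊆ B := by
  have hfin : {S : Set N.V | V₀ ⊆ S ∧ N.IsBiconn S}.Finite := Set.toFinite _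
  obtain ⟨B, hB, hmax⟩ := Set.Finite.exists_maximalFor (fun S => S.ncard)
    {S : Set N.V | V₀ ⊆ S ∧ N.IsBiconn S} hfin ⟨V₀, subset_rfl, hV⟩
  refine ⟨B, ⟨hB.2, ?_⟩, hB.1⟩
  intro B' hsub hB'
  have hB'mem : B' ∈ {S : Set N.V | V₀ ⊆ S ∧ N.IsBiconn S} := ⟨hB.1.trans hsub, hB'⟩
  have hle : B.ncard ≤ B'.ncard := Set.ncard_le_ncard hsub (Set.toFinite _)
  have := hmax hB'mem hle
  exact (Set.eq_of_subset_of_ncard_le hsub this.ge (Set.toFinite _)).symm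

lemma level1_pair (hl1 : N.Level1) {s : Set N.V} (hbic : N.IsBiconn s)
    {z1 z2 u1 u2 : N.V} (hz1 : z1 ∈ s) (hz2 : z2 ∈ s)
    (hh1 : N.IsHybrid z1) (hh2 : N.IsHybrid z2)
    (hu1 : u1 ∈ s) (hu1n : u1 ≠ z1) (hu1r : N.reach u1 z1)
    (hu2 : u2 ∈ s) (hu2n : u2 ≠ z2) (hu2r : N.reach u2 z2) : z1 = z2 := by
  obtain ⟨B, hBlock, hsub⟩ := exists_block_superset hbic
  exact hl1 B hBlock ⟨hsub hz1, hh1, u1, hsub hu1, hu1n, hu1r⟩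
    ⟨hsub hz2, hh2, u2, hsub hu2, hu2n, hu2r⟩

lemma parts_subset {a b c : N.V} {l l₁ l₂ : List N.V} (h₁ : DP N a c l₁) (h₂ : DP N c b l₂)
    (heq : l = l₁ ++ l₂.tail) : (∀ x ∈ l₁, x ∈ l) ∧ (∀ x ∈ l₂, x ∈ l) := by
  constructor
  · intro x hx
    exact heq ▸ List.mem_append_left _ hx
  · intro x hx
    obtain ⟨t, rfl⟩ := h₂.exists_cons
    rcases List.mem_cons.mp hx with rfl | hx'
    · exact heq ▸ List.mem_append_left _ h₁.last_mem
    · exact heq ▸ List.mem_append_right _ hx'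

lemma master2 (hl1 : N.Level1) {c z1 z2 : N.V} {l1 l2 : List N.V}
    (hS1 : DP N c z2 l1) (hS2 : DP N c z2 l2)
    (hint : ∀ x, x ∈ l1 → x ∈ l2 → x = c ∨ x = z2)
    (hz1 : z1 ∈ l1) (h1c : z1 ≠ c) (h12 : z1 ≠ z2) (hcz2 : c ≠ z2)
    (hhyb1 : N.IsHybrid z1) (hhyb2 : N.IsHybrid z2) : False := by
  have hbic := necklace2_biconn hS1 hS2 hcz2 hint
  have hcs : c ∈ {x | x ∈ l1 ∨ x ∈ l2} := Or.inl hS1.head_mem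
  have := level1_pair hl1 hbic (Or.inl hz1) (Or.inl hS1.last_mem) hhyb1 hhyb2
    hcs (Ne.symm h1c) (hS1.reach_head hz1) hcs hcz2 hS1.reach_ab
  exact h12 this

lemma master4 (hl1 : N.Level1) {u v' z1 z2 : N.V} {la1 la2 lb1 lb2 : List N.V}
    (hA1 : DP N u z1 la1) (hA2 : DP N u z2 la2)
    (hB1 : DP N v' z1 lb1) (hB2 : DP N v' z2 lb2)
    (H1 : ∀ t, t ∈ la1 → t ∈ lb1 → t = z1)
    (H2 : ∀ t, t ∈ la2 → t ∈ lb2 → t = z2)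
    (H3 : ∀ t, t ∈ la1 → t ∈ lb2 → False)
    (H4 : ∀ t, t ∈ la2 → t ∈ lb1 → False)
    (H5 : z1 ∉ la2) (H6 : z2 ∉ la1) : False := by
  -- prune the u-side arcs after their last common vertex m
  obtain ⟨m, hmA2, p₁, m1, hP₁, hA1', heqA, hApropA⟩ := hA1.last_suffix {t | t ∈ la2}
    ⟨u, hA1.head_mem, hA2.head_mem⟩
  obtain ⟨q₁, m2, hQ₁, hA2', heqA2⟩ := hA2.split hmA2
  have hm1sub : ∀ x ∈ m1, x ∈ la1 := (parts_subset hP₁ hA1' heqA).2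
  have hm2sub : ∀ x ∈ m2, x ∈ la2 := (parts_subset hQ₁ hA2' heqA2).2
  -- prune the v'-side arcs after their last common vertex n
  obtain ⟨n, hnB2, r₁, n1, hR₁, hB1', heqB, hBpropB⟩ := hB1.last_suffix {t | t ∈ lb2}
    ⟨v', hB1.head_mem, hB2.head_mem⟩
  obtain ⟨s₁, n2, hS₁, hB2', heqB2⟩ := hB2.split hnB2
  have hn1sub : ∀ x ∈ n1, x ∈ lb1 := (parts_subset hR₁ hB1' heqB).2
  have hn2sub : ∀ x ∈ n2, x ∈ lb2 := (parts_subset hS₁ hB2' heqB2).2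
  -- apply the 4-arc necklace
  have hbic := necklace4_biconn hA1' hB1' hB2' hA2'
    (fun x hx hy => H1 x (hm1sub x hx) (hn1sub x hy))
    (fun x hx hy => H2 x (hm2sub x hx) (hn2sub x hy))
    (fun x hx hy => H3 x (hm1sub x hx) (hn2sub x hy))
    (fun x hx hy => H4 x (hm2sub x hx) (hn1sub x hy))
    (fun x hx hy => hApropA x hx (hm2sub x hy))
    (fun x hx hy => hBpropB x hx (hn2sub x hy))
  set s : Set N.V := {x | x ∈ m1 ∨ x ∈ n1 ∨ x ∈ n2 ∨ x ∈ m2} with hs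
  -- z1, z2 are hybrids
  have hmz1 : m ≠ z1 := fun h => H5 (h ▸ hmA2)
  have hmz2 : m ≠ z2 := fun h => H6 (h ▸ hm1sub m hA1'.head_mem)
  have hnz1 : n ≠ z1 := fun h => H3 z1 hA1.last_mem (h ▸ hnB2)
  have hnz2 : n ≠ z2 := fun h => H4 z2 hA2.last_mem (h ▸ (hn1sub n hB1'.head_mem))
  have hz12 : z1 ≠ z2 := fun h => H6 (h ▸ hA1.last_mem)
  have hhyb1 : N.IsHybrid z1 := by
    obtain ⟨p, hp, hpE⟩ := hA1'.penult hmz1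
    obtain ⟨q, hq, hqE⟩ := hB1'.penult hnz1
    refine isHybrid_of_parents hpE hqE ?_
    intro hpq
    have := H1 p (hm1sub p hp) (by rw [hpq]; exact hn1sub q hq)
    exact E_ne hpE this
  have hhyb2 : N.IsHybrid z2 := by
    obtain ⟨p, hp, hpE⟩ := hA2'.penult hmz2
    obtain ⟨q, hq, hqE⟩ := hB2'.penult hnz2
    refine isHybrid_of_parents hpE hqE ?_
    intro hpq
    have := H2 p (hm2sub p hp) (by rw [hpq]; exact hn2sub q hq)
    exact E_ne hpE this
  have hz1s : z1 ∈ s := Or.inl hA1'.last_mem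
  have hz2s : z2 ∈ s := Or.inr (Or.inr (Or.inr hA2'.last_mem))
  have hms : m ∈ s := Or.inl hA1'.head_mem
  have := level1_pair hl1 hbic hz1s hz2s hhyb1 hhyb2
    hms hmz1 hA1'.reach_ab hms hmz2 hA2'.reach_ab
  exact hz12 this

end Network
namespace Network

variable {N : Network X}

lemma exists_max_reach (S : Set N.V) {t : N.V} (ht : t ∈ S) :
    ∃ z ∈ S, N.reach z t ∧ ∀ z' ∈ S, N.reach z' z → z' = z := by
  suffices h : ∀ n (t : N.V), t ∈ S → ({w | w ∈ S ∧ N.reach w t}).ncard ≤ n →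
      ∃ z ∈ S, N.reach z t ∧ ∀ z' ∈ S, N.reach z' z → z' = z by
    exact h _ t ht le_rfl
  intro n
  induction n with
  | zero =>
      intro t ht hle
      exfalso
      have hmem : t ∈ {w | w ∈ S ∧ N.reach w t} := ⟨ht, reach_refl N t⟩
      have := Set.ncard_pos (Set.toFinite _) |>.mpr ⟨t, hmem⟩
      omega
  | succ n IH =>
      intro t ht hle
      by_cases hmax : ∀ z' ∈ S, N.reach z' t → z' = t
      · exact ⟨t, ht, reach_refl N t, hmax⟩
      · push_neg at hmax
        obtain ⟨z', hz'S, hz't, hne⟩ := hmax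
        have hssub : {w | w ∈ S ∧ N.reach w z'} ⊂ {w | w ∈ S ∧ N.reach w t} := by
          constructor
          · exact fun w hw => ⟨hw.1, reach_trans hw.2 hz't⟩
          · intro hsub
            have : t ∈ {w | w ∈ S ∧ N.reach w z'} := hsub ⟨ht, reach_refl N t⟩
            exact hne (reach_antisymm hz't this.2)
        have hlt : ({w | w ∈ S ∧ N.reach w z'}).ncard < ({w | w ∈ S ∧ N.reach w t}).ncard :=
          Set.ncard_lt_ncard hssub (Set.toFinite _)
        obtain ⟨z, hzS, hzz', hmaxz⟩ := IH z' hz'S (by omega)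
        exact ⟨z, hzS, reach_trans hzz' hz't, hmaxz⟩

lemma exists_root_reach (N : Network X) : ∃ r : N.V, ∀ v, N.reach r v := by
  obtain ⟨r, _, hrun⟩ := N.root_unique
  refine ⟨r, fun v => ?_⟩
  obtain ⟨z, -, hzv, hmax⟩ := exists_max_reach (S := (Set.univ : Set N.V)) (Set.mem_univ v)
  have hnp : ∀ u, ¬ N.E u z := by
    intro u hE
    exact E_ne hE (hmax u (Set.mem_univ u) (reach_of_E hE))
  have : z = r := hrun z hnp
  exact this ▸ hzv

/-- common descendants -/
def Desc (N : Network X) (u v : N.V) : Set N.V := {z | N.reach u z ∧ N.reach v z}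

lemma overlap_incomp {u v : N.V} (h : Overlap (N.cluster u) (N.cluster v)) :
    ¬ N.reach u v ∧ ¬ N.reach v u := by
  constructor
  · intro hr
    exact h.2.2 (Set.inter_eq_right.mpr (cluster_mono hr))
  · intro hr
    exact h.2.1 (Set.inter_eq_left.mpr (cluster_mono hr))

/-- a maximal element of `Desc u v` is a hybrid vertex when `u, v` are incomparable -/
lemma max_desc_hybrid {u v z : N.V} (hiuv : ¬ N.reach u v ∧ ¬ N.reach v u)
    (hz : z ∈ N.Desc u v) (hmax : ∀ z' ∈ N.Desc u v, N.reach z' z → z' = z) :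
    N.IsHybrid z := by
  have hzu : z ≠ u := by rintro rfl; exact hiuv.2 hz.2
  have hzv : z ≠ v := by rintro rfl; exact hiuv.1 hz.1
  obtain ⟨lu, hlu⟩ := DP.of_reach hz.1
  obtain ⟨lv, hlv⟩ := DP.of_reach hz.2
  obtain ⟨p, hp, hpE⟩ := hlu.penult (Ne.symm hzu)
  obtain ⟨q, hq, hqE⟩ := hlv.penult (Ne.symm hzv)
  have hpv : ¬ N.reach v p := by
    intro hr
    exact E_ne hpE (hmax p ⟨hlu.reach_head hp, hr⟩ (reach_of_E hpE))
  refine isHybrid_of_parents hpE hqE ?_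
  rintro rfl
  exact hpv (hlv.reach_head hq)

/-- uniqueness of the maximal common descendant in a level-1 network -/
lemma max_desc_unique (hl1 : N.Level1) {u v z1 z2 : N.V}
    (hiuv : ¬ N.reach u v ∧ ¬ N.reach v u)
    (hz1 : z1 ∈ N.Desc u v) (hmax1 : ∀ z' ∈ N.Desc u v, N.reach z' z1 → z' = z1)
    (hz2 : z2 ∈ N.Desc u v) (hmax2 : ∀ z' ∈ N.Desc u v, N.reach z' z2 → z' = z2) :
    z1 = z2 := by
  by_contra hne
  have h12 : ¬ N.reach z1 z2 := by
    intro hr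
    exact hne (hmax2 z1 hz1 hr)
  have h21 : ¬ N.reach z2 z1 := by
    intro hr
    exact hne (hmax1 z2 hz2 hr).symm
  obtain ⟨la1, hA1⟩ := DP.of_reach hz1.1
  obtain ⟨la2, hA2⟩ := DP.of_reach hz2.1
  obtain ⟨lb1, hB1⟩ := DP.of_reach hz1.2
  obtain ⟨lb2, hB2⟩ := DP.of_reach hz2.2
  refine master4 hl1 hA1 hA2 hB1 hB2 ?_ ?_ ?_ ?_ ?_ ?_
  · intro t ht1 ht2
    exact hmax1 t ⟨hA1.reach_head ht1, hB1.reach_head ht2⟩ (hA1.reach_last ht1)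
  · intro t ht1 ht2
    exact hmax2 t ⟨hA2.reach_head ht1, hB2.reach_head ht2⟩ (hA2.reach_last ht1)
  · intro t ht1 ht2
    have : t = z2 := hmax2 t ⟨hA1.reach_head ht1, hB2.reach_head ht2⟩ (hB2.reach_last ht2)
    subst this
    exact h21 (hA1.reach_last ht1)
  · intro t ht1 ht2
    have : t = z1 := hmax1 t ⟨hA2.reach_head ht1, hB1.reach_head ht2⟩ (hB1.reach_last ht2)
    subst this
    exact h12 (hA2.reach_last ht1)
  · intro hmem
    exact h12 (hA2.reach_last hmem)
  · intro hmem
    exact h21 (hA1.reach_last hmem)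

/-- the cluster intersection of incomparable vertices is the cluster of the unique
maximal common descendant -/
lemma cluster_inter_eq (hl1 : N.Level1) {u v : N.V}
    (hiuv : ¬ N.reach u v ∧ ¬ N.reach v u)
    (hne : (N.cluster u ∩ N.cluster v).Nonempty) :
    ∃ z, (z ∈ N.Desc u v ∧ ∀ z' ∈ N.Desc u v, N.reach z' z → z' = z) ∧
      N.cluster u ∩ N.cluster v = N.cluster z ∧ N.IsHybrid z := by
  obtain ⟨x, hxu, hxv⟩ := hne
  have hxd : N.leafEmb x ∈ N.Desc u v := ⟨hxu, hxv⟩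
  obtain ⟨z, hzD, hzx, hmax⟩ := exists_max_reach (N.Desc u v) hxd
  refine ⟨z, ⟨hzD, hmax⟩, ?_, max_desc_hybrid hiuv hzD hmax⟩
  apply Set.Subset.antisymm
  · intro y hy
    have hyd : N.leafEmb y ∈ N.Desc u v := ⟨hy.1, hy.2⟩
    obtain ⟨z', hz'D, hz'y, hmax'⟩ := exists_max_reach (N.Desc u v) hyd
    have : z' = z := max_desc_unique hl1 hiuv hz'D hmax' hzD hmax
    exact this ▸ hz'y
  · intro y hy
    exact ⟨reach_trans hzD.1 hy, reach_trans hzD.2 hy⟩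

end Network
namespace Network

variable {N : Network X}

/-- the nested case: a hybrid strictly above the maximal common descendant of `u, w`,
itself below `u`, is impossible in a level-1 network. -/
lemma nested_case (hl1 : N.Level1) {u w z1 z2 : N.V}
    (hiuw : ¬ N.reach u w ∧ ¬ N.reach w u)
    (hz2 : z2 ∈ N.Desc u w) (hmax2 : ∀ z' ∈ N.Desc u w, N.reach z' z2 → z' = z2)
    (hhyb1 : N.IsHybrid z1) (hhyb2 : N.IsHybrid z2)
    (huz1 : N.reach u z1) (h12r : N.reach z1 z2) (hne : z1 ≠ z2) : False := by
  obtain ⟨r, hr⟩ := exists_root_reach N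
  obtain ⟨l_ru, h_ru⟩ := DP.of_reach (hr u)
  obtain ⟨l_uz1, h_uz1⟩ := DP.of_reach huz1
  obtain ⟨l_z12, h_z12⟩ := DP.of_reach h12r
  have full1 := (h_ru.append h_uz1).append h_z12
  obtain ⟨l_rw, h_rw⟩ := DP.of_reach (hr w)
  obtain ⟨l_wz2, h_wz2⟩ := DP.of_reach hz2.2
  have full2 := h_rw.append h_wz2
  set L1 : List N.V := (l_ru ++ l_uz1.tail) ++ l_z12.tail with hL1
  set L2 : List N.V := l_rw ++ l_wz2.tail with hL2
  have hz2r : z2 ≠ r := by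
    rintro rfl
    exact hiuw.1 (reach_antisymm (hr u) hz2.1 ▸ hr w)
  have hmemL2 : ∀ t ∈ L2, N.reach t w ∨ (N.reach w t ∧ N.reach t z2) := by
    intro t ht
    rcases List.mem_append.mp ht with h | h
    · exact Or.inl (h_rw.reach_last h)
    · have : t ∈ l_wz2 := List.mem_of_mem_tail h
      exact Or.inr ⟨h_wz2.reach_head this, h_wz2.reach_last this⟩
  have hz1mem : z1 ∈ L1 := by
    have := (parts_subset (h_ru.append h_uz1) h_z12 rfl).2
    exact this z1 h_z12.head_mem
  -- extract the suffix of full1 after the last vertex shared with (full2 minus z2)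
  have hrS : ∃ t ∈ L1, t ∈ {t : N.V | t ∈ L2 ∧ t ≠ z2} :=
    ⟨r, full1.head_mem, full2.head_mem, hz2r.symm⟩
  obtain ⟨c, hcS, p1, s1, hP, hS1, heq1, hprop⟩ := full1.last_suffix _ hrS
  have hc2 : c ∈ L2 := hcS.1
  have hcz2 : c ≠ z2 := hcS.2
  obtain ⟨q1, s2, hQ, hS2, heq2⟩ := full2.split hc2
  have hs2sub : ∀ x ∈ s2, x ∈ L2 := (parts_subset hQ hS2 heq2).2
  -- killing `reach z1 c`
  have hkill : ¬ N.reach z1 c := by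
    intro hzc
    rcases hmemL2 c hc2 with h | h
    · exact hiuw.1 (reach_trans huz1 (reach_trans hzc h))
    · have hcD : c ∈ N.Desc u w := ⟨reach_trans huz1 hzc, h.1⟩
      exact hcz2 (hmax2 c hcD h.2)
  have hcz1 : N.reach c z1 := by
    rcases full1.mem_comparable (heq1 ▸ List.mem_append_left _ hP.last_mem) hz1mem with h | h
    · exact h
    · exact absurd h hkill
  have hcnz1 : c ≠ z1 := by
    rintro rfl
    exact hkill (reach_refl N c)
  have hz1s1 : z1 ∈ s1 := by
    rcases List.mem_append.mp (heq1 ▸ hz1mem) with h | h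
    · exact absurd (hP.reach_last h) hkill
    · exact List.mem_of_mem_tail h
  refine master2 hl1 hS1 hS2 ?_ hz1s1 (fun h => hkill (h ▸ reach_refl N z1)) hne hcz2 hhyb1 hhyb2
  intro x hx1 hx2
  by_cases hxz : x = z2
  · exact Or.inr hxz
  · exact Or.inl (hprop x hx1 ⟨hs2sub x hx2, hxz⟩)

lemma core_subset (hl1 : N.Level1) {u v w z1 z2 : N.V}
    (hiuv : ¬ N.reach u v ∧ ¬ N.reach v u) (hiuw : ¬ N.reach u w ∧ ¬ N.reach w u)
    (hz1 : z1 ∈ N.Desc u v) (hmax1 : ∀ z' ∈ N.Desc u v, N.reach z' z1 → z' = z1)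
    (hz2 : z2 ∈ N.Desc u w) (hmax2 : ∀ z' ∈ N.Desc u w, N.reach z' z2 → z' = z2)
    (hhyb1 : N.IsHybrid z1) (hhyb2 : N.IsHybrid z2) :
    N.cluster z1 ⊆ N.cluster z2 := by
  by_cases heq : z1 = z2
  · subst heq; exact subset_rfl
  by_cases h21 : N.reach z2 z1
  · exact cluster_mono h21
  by_cases h12 : N.reach z1 z2
  · exact absurd (nested_case hl1 hiuw hz2 hmax2 hhyb1 hhyb2 hz1.1 h12 heq) not_false
  exfalso
  obtain ⟨r, hr⟩ := exists_root_reach N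
  obtain ⟨la1, hA1⟩ := DP.of_reach hz1.1
  obtain ⟨la2, hA2⟩ := DP.of_reach hz2.1
  obtain ⟨l_rv, h_rv⟩ := DP.of_reach (hr v)
  obtain ⟨l_vz1, h_vz1⟩ := DP.of_reach hz1.2
  obtain ⟨l_rw, h_rw⟩ := DP.of_reach (hr w)
  obtain ⟨l_wz2, h_wz2⟩ := DP.of_reach hz2.2
  have hB1 := h_rv.append h_vz1
  have hB2 := h_rw.append h_wz2
  refine master4 hl1 hA1 hA2 hB1 hB2 ?_ ?_ ?_ ?_ ?_ ?_
  · intro t ht1 ht2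
    rcases List.mem_append.mp ht2 with h | h
    · exact absurd (reach_trans (hA1.reach_head ht1) (h_rv.reach_last h)) hiuv.1
    · have h' : t ∈ l_vz1 := List.mem_of_mem_tail h
      exact hmax1 t ⟨hA1.reach_head ht1, h_vz1.reach_head h'⟩ (hA1.reach_last ht1)
  · intro t ht1 ht2
    rcases List.mem_append.mp ht2 with h | h
    · exact absurd (reach_trans (hA2.reach_head ht1) (h_rw.reach_last h)) hiuw.1
    · have h' : t ∈ l_wz2 := List.mem_of_mem_tail h
      exact hmax2 t ⟨hA2.reach_head ht1, h_wz2.reach_head h'⟩ (hA2.reach_last ht1)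
  · intro t ht1 ht2
    rcases List.mem_append.mp ht2 with h | h
    · exact hiuw.1 (reach_trans (hA1.reach_head ht1) (h_rw.reach_last h))
    · have h' : t ∈ l_wz2 := List.mem_of_mem_tail h
      have : t = z2 := hmax2 t ⟨hA1.reach_head ht1, h_wz2.reach_head h'⟩ (h_wz2.reach_last h')
      subst this
      exact h21 (hA1.reach_last ht1)
  · intro t ht1 ht2
    rcases List.mem_append.mp ht2 with h | h
    · exact hiuv.1 (reach_trans (hA2.reach_head ht1) (h_rv.reach_last h))
    · have h' : t ∈ l_vz1 := List.mem_of_mem_tail h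
      have : t = z1 := hmax1 t ⟨hA2.reach_head ht1, h_vz1.reach_head h'⟩ (h_vz1.reach_last h')
      subst this
      exact h12 (hA2.reach_last ht1)
  · intro hmem
    exact h12 (hA2.reach_last hmem)
  · intro hmem
    exact h21 (hA1.reach_last hmem)

/-- Main theorem for the forward directions: a level-1 network has a clustering system
satisfying property (L). -/
theorem level1_propertyL (hl1 : N.Level1) : PropertyL N.CS := by
  rintro C1 hC1 C2 hC2 C3 hC3 h12 h13
  obtain ⟨u, rfl⟩ := hC1
  obtain ⟨v, rfl⟩ := hC2
  obtain ⟨w, rfl⟩ := hC3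
  have hiuv := overlap_incomp h12
  have hiuw := overlap_incomp h13
  obtain ⟨z1, ⟨hz1D, hmax1⟩, heq1, hhyb1⟩ := cluster_inter_eq hl1 hiuv h12.1
  obtain ⟨z2, ⟨hz2D, hmax2⟩, heq2, hhyb2⟩ := cluster_inter_eq hl1 hiuw h13.1
  rw [heq1, heq2]
  exact Set.Subset.antisymm
    (core_subset hl1 hiuv hiuw hz1D hmax1 hz2D hmax2 hhyb1 hhyb2)
    (core_subset hl1 hiuw hiuv hz2D hmax2 hz1D hmax1 hhyb2 hhyb1)

end Network
section Hasse

variable {X : Type} [Fintype X] (𝓘 : Set (Set X))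

/-- the Hasse/cover relation of a family of sets -/
def Cov (A B : Set X) : Prop := B ⊂ A ∧ ¬ ∃ W ∈ 𝓘, B ⊂ W ∧ W ⊂ A

variable {𝓘}

lemma exists_cov_below {A B : Set X} (hA : A ∈ 𝓘) (hB : B ∈ 𝓘) (hBA : B ⊂ A) :
    ∃ W ∈ 𝓘, B ⊆ W ∧ Cov 𝓘 A W := by
  obtain ⟨W, hW, hmax⟩ := Set.Finite.exists_maximalFor (fun C => C)
    {W ∈ 𝓘 | B ⊆ W ∧ W ⊂ A} (Set.toFinite _) ⟨B, hB, subset_rfl, hBA⟩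
  refine ⟨W, hW.1, hW.2.1, hW.2.2, ?_⟩
  rintro ⟨W', hW', hWW', hW'A⟩
  have : W = W' := Set.Subset.antisymm hWW'.subset (hmax ⟨hW', hW.2.1.trans hWW'.subset, hW'A⟩ hWW'.subset)
  exact hWW'.ne this

lemma exists_cov_above {A : Set X} (hA : A ∈ 𝓘) (huniv : Set.univ ∈ 𝓘)
    (hAu : A ≠ Set.univ) : ∃ W ∈ 𝓘, Cov 𝓘 W A := by
  obtain ⟨W, hW, hmin⟩ := Set.Finite.exists_minimalFor (fun C => C)
    {W ∈ 𝓘 | A ⊂ W} (Set.toFinite _)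
    ⟨Set.univ, huniv, Set.ssubset_univ_iff.mpr hAu⟩
  refine ⟨W, hW.1, hW.2, ?_⟩
  rintro ⟨W', hW', hAW', hW'W⟩
  have : W = W' := Set.Subset.antisymm (hmin ⟨hW', hAW'⟩ hW'W.subset) hW'W.subset
  exact hW'W.ne this.symm

variable (𝓘)

/-- The Hasse-diagram network of a finite closed set family. -/
noncomputable def hasse (hne : ∀ A ∈ 𝓘, A.Nonempty) (huniv : Set.univ ∈ 𝓘)
    (hsing : ∀ x : X, {x} ∈ 𝓘) : Network X where
  V := {A : Set X // A ∈ 𝓘}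
  fintypeV := Fintype.ofFinite _
  E := fun u v => Cov 𝓘 u.1 v.1
  leafEmb := fun x => ⟨{x}, hsing x⟩
  leafEmb_inj := by
    intro x y h
    have : ({x} : Set X) = {y} := congrArg Subtype.val h
    simpa using this
  acyclic := by
    have hsub : ∀ {u v : {A : Set X // A ∈ 𝓘}},
        Relation.ReflTransGen (fun u v => Cov 𝓘 u.1 v.1) u v → v.1 ⊆ u.1 := by
      intro u v h
      induction h with
      | refl => exact subset_rfl
      | tail _ e IH => exact e.1.subset.trans IH
    intro u v hE hR
    exact hE.1.not_subset (hsub hR)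
  root_unique := by
    refine ⟨⟨Set.univ, huniv⟩, ?_, ?_⟩
    · intro u hE
      exact hE.1.not_subset (Set.subset_univ _)
    · intro y hy
      by_contra hne'
      have hyu : y.1 ≠ Set.univ := fun h => hne' (Subtype.ext h)
      obtain ⟨W, hW, hcov⟩ := exists_cov_above y.2 huniv hyu
      exact hy ⟨W, hW⟩ hcov
  leaf_iff := by
    intro v
    constructor
    · intro h
      obtain ⟨x, hx⟩ := hne v.1 v.2
      refine ⟨x, ?_⟩
      have hsub : ({x} : Set X) ⊆ v.1 := Set.singleton_subset_iff.mpr hx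
      rcases eq_or_ne ({x} : Set X) v.1 with heq | hne'
      · exact Subtype.ext heq
      · exfalso
        obtain ⟨W, hW, hxW, hcov⟩ := exists_cov_below v.2 (hsing x) ⟨hsub, fun h => hne' (Set.Subset.antisymm hsub h)⟩
        exact h ⟨W, hW⟩ hcov
    · rintro ⟨x, rfl⟩ w hE
      have : w.1 ⊂ {x} := hE.1
      have hw : w.1 = ∅ := by
        rcases Set.eq_empty_or_nonempty w.1 with h | h
        · exact h
        · obtain ⟨y, hy⟩ := h
          have hyx : y = x := this.subset hy
          exact absurd (Set.singleton_subset_iff.mpr (hyx ▸ hy) : ({x} : Set X) ⊆ w.1)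
            (by intro hh; exact this.not_subset hh)
      exact absurd (hw ▸ hne w.1 w.2) (by simp)

variable {𝓘}
variable {hne : ∀ A ∈ 𝓘, A.Nonempty} {huniv : Set.univ ∈ 𝓘} {hsing : ∀ x : X, {x} ∈ 𝓘}

namespace HasseFacts

local notation "HN" => hasse 𝓘 hne huniv hsing

lemma hasse_E_iff {u v : (HN).V} : (HN).E u v ↔ Cov 𝓘 u.1 v.1 := Iff.rfl

lemma reach_subset {u v : (HN).V} (h : (HN).reach u v) : v.1 ⊆ u.1 := by
  induction h with
  | refl => exact subset_rfl
  | tail _ e IH => exact e.1.subset.trans IH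

lemma subset_reach : ∀ {u v : (HN).V}, v.1 ⊆ u.1 → (HN).reach u v := by
  suffices h : ∀ (n : ℕ) (u v : (HN).V), u.1.ncard ≤ n → v.1 ⊆ u.1 → (HN).reach u v by
    intro u v hsub
    exact h u.1.ncard u v le_rfl hsub
  intro n
  induction n with
  | zero =>
      intro u v hle hsub
      exfalso
      have := Set.ncard_pos (Set.toFinite _) |>.mpr (hne u.1 u.2)
      omega
  | succ n IH =>
      intro u v hle hsub
      rcases eq_or_ne v.1 u.1 with heq | hne'
      · exact (Subtype.ext heq : v = u) ▸ Network.reach_refl _ _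
      · obtain ⟨W, hW, hvW, hcov⟩ := exists_cov_below u.2 v.2 ⟨hsub, fun h => hne' (Set.Subset.antisymm hsub h)⟩
        have hWlt : W.ncard < u.1.ncard := Set.ncard_lt_ncard hcov.1 (Set.toFinite _)
        have hreach : (HN).reach ⟨W, hW⟩ v :=
          IH ⟨W, hW⟩ v (Nat.lt_succ_iff.mp (lt_of_lt_of_le hWlt hle)) hvW
        exact Relation.ReflTransGen.head (show (HN).E u ⟨W, hW⟩ from hcov) hreach

lemma reach_iff {u v : (HN).V} : (HN).reach u v ↔ v.1 ⊆ u.1 :=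
  ⟨reach_subset, subset_reach⟩

lemma cluster_eq (v : (HN).V) : (HN).cluster v = v.1 := by
  ext x
  show (HN).reach v ⟨{x}, hsing x⟩ ↔ x ∈ v.1
  refine reach_iff.trans ?_
  simp

lemma CS_eq : (HN).CS = 𝓘 := by
  ext C
  constructor
  · rintro ⟨v, rfl⟩
    exact cluster_eq v ▸ v.2
  · intro hC
    exact ⟨⟨C, hC⟩, cluster_eq _⟩

end HasseFacts

end Hasse
section HasseLevel1

variable {X : Type} [Fintype X] {𝓘 : Set (Set X)}
variable {hne : ∀ A ∈ 𝓘, A.Nonempty} {huniv : Set.univ ∈ 𝓘} {hsing : ∀ x : X, {x} ∈ 𝓘}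

namespace HasseFacts

local notation "HN" => hasse 𝓘 hne huniv hsing

lemma ssub_of_ne {t w : (HN).V} (h : t.1 ⊆ w.1) (hnev : t ≠ w) : t.1 ⊂ w.1 :=
  ⟨h, fun h' => hnev (Subtype.ext (Set.Subset.antisymm h h'))⟩

lemma cov_no_between {u v : (HN).V} (h : (HN).E u v) {W : Set X} (hW : W ∈ 𝓘)
    (h1 : v.1 ⊂ W) (h2 : W ⊂ u.1) : False := h.2 ⟨W, hW, h1, h2⟩

lemma cov_pair_value (hne' : ∀ A ∈ 𝓘, A.Nonempty) (hclosed : IsClosedCS 𝓘) {P P' C : Set X}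
    (hP : P ∈ 𝓘) (hP' : P' ∈ 𝓘) (hC : C ∈ 𝓘)
    (h1 : Cov 𝓘 P C) (h2 : Cov 𝓘 P' C) (hnePP : P ≠ P') :
    Overlap P P' ∧ P ∩ P' = C := by
  have hCne : C.Nonempty := hne' C hC
  have hsub : C ⊆ P ∩ P' := Set.subset_inter h1.1.subset h2.1.subset
  have hmem : P ∩ P' ∈ 𝓘 := hclosed P hP P' hP' (hCne.mono hsub)
  have hssP : P ∩ P' ⊂ P := by
    refine ⟨Set.inter_subset_left, fun hsub' => ?_⟩
    have hPP' : P ⊆ P' := fun x hx => (hsub' hx).2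
    rcases eq_or_ne P P' with h | h
    · exact hnePP h
    · exact h2.2 ⟨P, hP, h1.1, ⟨hPP', fun h' => h (Set.Subset.antisymm hPP' h')⟩⟩
  have hssP' : P ∩ P' ⊂ P' := by
    refine ⟨Set.inter_subset_right, fun hsub' => ?_⟩
    have hP'P : P' ⊆ P := fun x hx => (hsub' hx).1
    rcases eq_or_ne P P' with h | h
    · exact hnePP h
    · exact h1.2 ⟨P', hP', h2.1, ⟨hP'P, fun h' => h (Set.Subset.antisymm h' hP'P)⟩⟩
  have heq : P ∩ P' = C := by
    by_contra hneq
    exact h1.2 ⟨P ∩ P', hmem, ⟨hsub, fun h' => hneq (Set.Subset.antisymm h' hsub)⟩, hssP⟩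
  exact ⟨⟨heq ▸ hCne, fun h => hssP.ne h, fun h => hssP'.ne h⟩, heq⟩

lemma hybrid_parents {v : (HN).V} (hv : (HN).IsHybrid v) :
    ∃ P P' : (HN).V, (HN).E P v ∧ (HN).E P' v ∧ P ≠ P' := by
  have h1 : 1 < {u : (HN).V | (HN).E u v}.ncard := hv
  rw [Set.one_lt_ncard_iff (Set.toFinite _)] at h1
  obtain ⟨a, b, ha, hb, hab⟩ := h1
  exact ⟨a, b, ha, hb, hab⟩

lemma hybrid_value (hclosed : IsClosedCS 𝓘) {v : (HN).V} (hv : (HN).IsHybrid v) :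
    ∃ P P', P ∈ 𝓘 ∧ P' ∈ 𝓘 ∧ Overlap P P' ∧ P ∩ P' = v.1 := by
  obtain ⟨P, P', h1, h2, hnePP⟩ := hybrid_parents hv
  have := cov_pair_value hne hclosed P.2 P'.2 v.2 h1 h2
    (fun h => hnePP (Subtype.ext h))
  exact ⟨P.1, P'.1, P.2, P'.2, this.1, this.2⟩

lemma hybrid_cmp (hclosed : IsClosedCS 𝓘) (hLI : PropertyL 𝓘) {v : (HN).V}
    (hv : (HN).IsHybrid v) {D : Set X} (hD : D ∈ 𝓘) :
    v.1 ⊆ D ∨ D ⊆ v.1 ∨ D ∩ v.1 = ∅ := by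
  obtain ⟨P, P', hP, hP', hov, heq⟩ := hybrid_value (hne := hne) hclosed hv
  have := value_comparable hLI hP hP' hD hov
  rw [heq] at this
  exact this

/-- no vertex of a biconnected set lies strictly below a qualifying hybrid vertex -/
lemma no_below (hclosed : IsClosedCS 𝓘) (hLI : PropertyL 𝓘) {B : Set (HN).V}
    (hbic : (HN).IsBiconn B) {v1 u1 : (HN).V}
    (hv1 : v1 ∈ B) (hhyb : (HN).IsHybrid v1)
    (hu1 : u1 ∈ B) (hu1n : u1 ≠ v1) (hreach : (HN).reach u1 v1)
    {d : (HN).V} (hd : d ∈ B) : ¬ d.1 ⊂ v1.1 := by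
  intro hdv
  have hpre := hbic.2 v1 hv1
  have hdnv : d ≠ v1 := fun h => hdv.ne (congrArg Subtype.val h)
  have hu1mem : u1 ∈ B \ {v1} := ⟨hu1, fun h => hu1n (by simpa using h)⟩
  have hdmem : d ∈ B \ {v1} := ⟨hd, fun h => hdnv (by simpa using h)⟩
  have hPu1 : ¬ u1.1 ⊂ v1.1 := by
    intro h
    exact h.not_subset (reach_subset (hne := hne) (huniv := huniv) (hsing := hsing) hreach)
  refine hPu1 (Network.preconnected_invariant hpre (fun t => t.1 ⊂ v1.1) ?_ hdmem hu1mem hdv)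
  intro t t' ht ht' hadj hPt
  rcases hadj.2 with hE | hE
  · exact hE.1.trans hPt
  · rcases hybrid_cmp (hne := hne) hclosed hLI hhyb t'.2 with h | h | h
    · exfalso
      have hv1t' : v1.1 ⊂ t'.1 := ssub_of_ne (t := v1) h (fun heq => ht'.2 (by simp [heq.symm]))
      exact cov_no_between hE v1.2 hPt hv1t'
    · exact ssub_of_ne (w := v1) h (fun heq => ht'.2 (by simp [heq]))
    · exfalso
      have : t.1 ⊆ t'.1 ∩ v1.1 := Set.subset_inter hE.1.subset hPt.subset
      rw [h] at this
      exact absurd (Set.subset_empty_iff.mp this) (by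
        have := hne t.1 t.2
        intro hemp
        rw [hemp] at this
        exact this.ne_empty rfl)

lemma classify (hclosed : IsClosedCS 𝓘) (hLI : PropertyL 𝓘) {B : Set (HN).V}
    (hbic : (HN).IsBiconn B) {v1 u1 : (HN).V}
    (hv1 : v1 ∈ B) (hhyb : (HN).IsHybrid v1)
    (hu1 : u1 ∈ B) (hu1n : u1 ≠ v1) (hreach : (HN).reach u1 v1)
    {t : (HN).V} (ht : t ∈ B) : t = v1 ∨ v1.1 ⊆ t.1 ∨ t.1 ∩ v1.1 = ∅ := by
  rcases hybrid_cmp (hne := hne) hclosed hLI hhyb t.2 with h | h | h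
  · exact Or.inr (Or.inl h)
  · rcases eq_or_ne t v1 with heq | hne'
    · exact Or.inl heq
    · exact absurd (ssub_of_ne h hne') (no_below hclosed hLI hbic hv1 hhyb hu1 hu1n hreach ht)
  · exact Or.inr (Or.inr h)

end HasseFacts

end HasseLevel1
section HasseLevel10

variable {X : Type} [Fintype X] {𝓘 : Set (Set X)}
variable {hne : ∀ A ∈ 𝓘, A.Nonempty} {huniv : Set.univ ∈ 𝓘} {hsing : ∀ x : X, {x} ∈ 𝓘}

namespace HasseFacts

local notation "HN" => hasse 𝓘 hne huniv hsing

lemma case_III (hclosed : IsClosedCS 𝓘) (hLI : PropertyL 𝓘) {B : Set (HN).V}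
    (hbic : (HN).IsBiconn B) {v1 Wm : (HN).V} {Z0 : Set X}
    (hv1 : v1 ∈ B) (hhyb1 : (HN).IsHybrid v1)
    (hWmB : Wm ∈ B) (hC1Wms : v1.1 ⊂ Wm.1) (hWmnv1 : Wm ≠ v1)
    (hmin : ∀ W' : (HN).V,
      (W' ∈ B ∧ v1.1 ⊆ W'.1 ∧ ∃ y, y ∈ B ∧ (HN).E W' y ∧ y.1 ∩ v1.1 = ∅) →
      W'.1 ⊆ Wm.1 → W' = Wm)
    (hZ0 : Z0 ∈ 𝓘) (hovZ0 : Overlap Wm.1 Z0)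
    (hval : ∀ Z' ∈ 𝓘, Overlap Wm.1 Z' → Wm.1 ∩ Z' = Wm.1 ∩ Z0)
    (hvqI : Wm.1 ∩ Z0 ∈ 𝓘)
    (hvq_cmp : ∀ D ∈ 𝓘, Wm.1 ∩ Z0 ⊆ D ∨ D ⊆ Wm.1 ∩ Z0 ∨ D ∩ (Wm.1 ∩ Z0) = ∅)
    (hcase3 : v1.1 ⊂ Wm.1 ∩ Z0)
    (hclassify : ∀ {t : (HN).V}, t ∈ B → t = v1 ∨ v1.1 ⊆ t.1 ∨ t.1 ∩ v1.1 = ∅)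
    (hNB : ∀ {d : (HN).V}, d ∈ B → ¬ d.1 ⊂ v1.1) : False := by
  classical
  set C1 : Set X := v1.1 with hC1def
  set vq : Set X := Wm.1 ∩ Z0 with hvqdef
  have hC1ne : C1.Nonempty := hne _ v1.2
  have hC1Wm : C1 ⊆ Wm.1 := hC1Wms.subset
  -- the vq vertex
  set vv : (HN).V := ⟨vq, hvqI⟩ with hvvdef
  have hvqWm : vq ⊂ Wm.1 := by
    refine ⟨Set.inter_subset_left, fun hsub => ?_⟩
    exact hovZ0.2.1 (Set.inter_eq_left.mpr (fun x hx => (hsub hx).2))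
  have hprevv : ((HN).UG.induce ((B \ {vv}) : Set (HN).V)).Preconnected := by
    by_cases hvvB : vv ∈ B
    · exact hbic.2 vv hvvB
    · rw [Set.diff_singleton_eq_self hvvB]
      exact hbic.1.preconnected
  have hv1mem : v1 ∈ B \ {vv} := by
    refine ⟨hv1, fun h => ?_⟩
    have : v1 = vv := by simpa using h
    exact hcase3.ne (congrArg Subtype.val this)
  have hWmmem : Wm ∈ B \ {vv} := by
    refine ⟨hWmB, fun h => ?_⟩
    have : Wm = vv := by simpa using h
    exact hvqWm.ne (congrArg Subtype.val this).symm
  have hinv := Network.preconnected_invariant hprevv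
    (fun t => C1 ⊆ t.1 ∧ t.1 ⊂ vq) ?_ hv1mem hWmmem ⟨subset_rfl, hcase3⟩
  · exact (hinv.2.trans hvqWm).ne rfl
  · intro t t' ht ht' hadj hPt
    obtain ⟨hPt1, hPt2⟩ := hPt
    have htB : t ∈ B := ht.1
    have ht'B : t' ∈ B := ht'.1
    have htnev : t ≠ vv := fun h => ht.2 (by simpa using h)
    have ht'nev : t' ≠ vv := fun h => ht'.2 (by simpa using h)
    have htne' : t.1.Nonempty := hne _ t.2
    rcases hadj.2 with hE | hE
    · -- t' below t
      rcases hclassify ht'B with hh | hh | hh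
      · exact ⟨by rw [hh], by rw [hh]; exact hcase3⟩
      · exact ⟨hh, hE.1.trans hPt2⟩
      · exfalso
        have hss : t.1 ⊂ Wm.1 := hPt2.trans hvqWm
        exact absurd (hmin t ⟨htB, hPt1, t', ht'B, hE, hh⟩ hss.subset)
          (fun heq => hss.ne (congrArg Subtype.val heq))
    · -- t' above t (E t' t is a cover)
      rcases hvq_cmp t'.1 t'.2 with h | h | h
      · -- vq ⊆ t'
        exfalso
        have hvqt' : vq ⊂ t'.1 :=
          ⟨h, fun hsub => ht'nev (Subtype.ext (Set.Subset.antisymm hsub h))⟩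
        exact cov_no_between hE hvqI hPt2 hvqt'
      · -- t' ⊆ vq
        have hss : t'.1 ⊂ vq :=
          ⟨h, fun hsub => ht'nev (Subtype.ext (Set.Subset.antisymm h hsub))⟩
        exact ⟨hPt1.trans hE.1.subset, hss⟩
      · -- disjoint
        exfalso
        have : t.1 ⊆ t'.1 ∩ vq := Set.subset_inter hE.1.subset hPt2.subset
        rw [h] at this
        exact htne'.ne_empty (Set.subset_empty_iff.mp this)

end HasseFacts

end HasseLevel10
section HasseLevel12

variable {X : Type} [Fintype X] {𝓘 : Set (Set X)}
variable {hne : ∀ A ∈ 𝓘, A.Nonempty} {huniv : Set.univ ∈ 𝓘} {hsing : ∀ x : X, {x} ∈ 𝓘}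

namespace HasseFacts

local notation "HN" => hasse 𝓘 hne huniv hsing

lemma disjoint_qual_false (hclosed : IsClosedCS 𝓘) (hLI : PropertyL 𝓘) {B : Set (HN).V}
    (hbic : (HN).IsBiconn B) {v1 u1 v2 u2 : (HN).V}
    (hv1 : v1 ∈ B) (hhyb1 : (HN).IsHybrid v1)
    (hu1 : u1 ∈ B) (hu1n : u1 ≠ v1) (hreach1 : (HN).reach u1 v1)
    (hv2 : v2 ∈ B) (hhyb2 : (HN).IsHybrid v2)
    (hdisj : v2.1 ∩ v1.1 = ∅) : False := by
  classical
  set C1 : Set X := v1.1 with hC1def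
  have hC1ne : C1.Nonempty := hne _ v1.2
  have hC2ne : v2.1.Nonempty := hne _ v2.2
  have hclassify : ∀ {t : (HN).V}, t ∈ B → t = v1 ∨ C1 ⊆ t.1 ∨ t.1 ∩ C1 = ∅ :=
    fun ht => classify hclosed hLI hbic hv1 hhyb1 hu1 hu1n hreach1 ht
  have hNB : ∀ {d : (HN).V}, d ∈ B → ¬ d.1 ⊂ C1 :=
    fun hd => no_below hclosed hLI hbic hv1 hhyb1 hu1 hu1n hreach1 hd
  have hv2v1 : v2 ≠ v1 := by
    intro h
    rw [h] at hdisj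
    rw [Set.inter_self] at hdisj
    exact hC1ne.ne_empty hdisj
  -- Step 1: an "entry" exists
  have hEntne : ∃ W : (HN).V,
      W ∈ B ∧ C1 ⊆ W.1 ∧ ∃ y, y ∈ B ∧ (HN).E W y ∧ y.1 ∩ C1 = ∅ := by
    by_contra hno
    have hinv := Network.preconnected_invariant (hbic.1.preconnected)
      (fun t => C1 ⊆ t.1 ∨ t = v1) ?_ hv1 hv2 (Or.inr rfl)
    · rcases hinv with h | h
      · have : C1 ⊆ v2.1 ∩ C1 := Set.subset_inter h subset_rfl
        rw [hdisj] at this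
        exact hC1ne.ne_empty (Set.subset_empty_iff.mp this)
      · exact hv2v1 h
    · intro t t' ht ht' hadj hPt
      rcases hPt with hPt | hPt
      · rcases hadj.2 with hE | hE
        · -- E t t' : t' is below t
          rcases hclassify ht' with h | h | h
          · exact Or.inr h
          · exact Or.inl h
          · exact absurd ⟨t, ht, hPt, t', ht', hE, h⟩ hno
        · exact Or.inl (hPt.trans hE.1.subset)
      · subst hPt
        rcases hadj.2 with hE | hE
        · exact absurd (hE.1 : t'.1 ⊂ C1) (hNB ht')
        · exact Or.inl hE.1.subset
  -- Step 2: a minimal entry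
  obtain ⟨Wm, hWmEnt, hWmmin⟩ := Set.Finite.exists_minimalFor (fun (W : (HN).V) => W.1)
    {W : (HN).V | W ∈ B ∧ C1 ⊆ W.1 ∧ ∃ y, y ∈ B ∧ (HN).E W y ∧ y.1 ∩ C1 = ∅}
    (Set.toFinite _) hEntne
  obtain ⟨hWmB, hC1Wm, ystar, hyB, hyE, hyd⟩ := hWmEnt
  have hysub : ystar.1 ⊂ Wm.1 := hyE.1
  have hWmneC1 : Wm.1 ≠ C1 := by
    intro h
    have : ystar.1 ⊂ C1 := h ▸ hysub
    have : ystar.1 ⊆ ystar.1 ∩ C1 := Set.subset_inter subset_rfl this.subset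
    rw [hyd] at this
    exact (hne _ ystar.2).ne_empty (Set.subset_empty_iff.mp this)
  have hC1Wms : C1 ⊂ Wm.1 := ⟨hC1Wm, fun h => hWmneC1 (Set.Subset.antisymm h hC1Wm)⟩
  have hWmnv1 : Wm ≠ v1 := fun h => hWmneC1 (congrArg Subtype.val h)
  have hynWm : ystar ≠ Wm := fun h => hysub.ne (congrArg Subtype.val h)
  -- min property in convenient form
  have hmin : ∀ W' : (HN).V,
      (W' ∈ B ∧ C1 ⊆ W'.1 ∧ ∃ y, y ∈ B ∧ (HN).E W' y ∧ y.1 ∩ C1 = ∅) →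
      W'.1 ⊆ Wm.1 → W' = Wm := by
    intro W' hW' hsub
    exact Subtype.ext (Set.Subset.antisymm hsub (hWmmin hW' hsub))
  -- the four cases
  by_cases hAtt : ∃ Z ∈ 𝓘, Overlap Wm.1 Z
  case neg =>
    -- CASE I : Wm overlaps nothing; G := below Wm, disjoint from C1 is separated by Wm
    have hpre := hbic.2 Wm hWmB
    have hv1mem : v1 ∈ B \ {Wm} := ⟨hv1, fun h => hWmnv1 (by simpa using h.symm)⟩
    have hymem : ystar ∈ B \ {Wm} := ⟨hyB, fun h => hynWm (by simpa using h)⟩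
    have hinv := Network.preconnected_invariant hpre
      (fun t => t.1 ⊆ Wm.1 ∧ t.1 ∩ C1 = ∅) ?_ hymem hv1mem ⟨hysub.subset, hyd⟩
    · have h2 := hinv.2
      rw [hC1def, Set.inter_self] at h2
      exact (hne _ v1.2).ne_empty h2
    · intro t t' ht ht' hadj hPt
      obtain ⟨hPt1, hPt2⟩ := hPt
      have htB : t ∈ B := ht.1
      have ht'B : t' ∈ B := ht'.1
      have htne : t ≠ Wm := fun h => ht.2 (by simpa using h)
      have ht'ne : t' ≠ Wm := fun h => ht'.2 (by simpa using h)
      have htne' : t.1.Nonempty := hne _ t.2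
      rcases hadj.2 with hE | hE
      · refine ⟨hE.1.subset.trans hPt1, Set.subset_empty_iff.mp ?_⟩
        rw [← hPt2]
        exact Set.inter_subset_inter_left C1 hE.1.subset
      · -- E t' t, t ⊂ t' is a cover
        have hne2 : (t'.1 ∩ Wm.1).Nonempty := htne'.mono (Set.subset_inter hE.1.subset hPt1)
        rcases rel_cases hne2 with h | h | h
        · -- t' ⊆ Wm
          have hss : t'.1 ⊂ Wm.1 := ssub_of_ne h ht'ne
          rcases hclassify ht'B with hh | hh | hh
          · exfalso
            have hsub : t.1 ⊂ C1 := by rw [hC1def, ← hh]; exact hE.1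
            have hcc : t.1 ⊆ t.1 ∩ C1 := Set.subset_inter subset_rfl hsub.subset
            rw [hPt2] at hcc
            exact htne'.ne_empty (Set.subset_empty_iff.mp hcc)
          · exact absurd (hmin t' ⟨ht'B, hh, t, htB, hE, hPt2⟩ hss.subset)
              (fun heq => hss.ne (congrArg Subtype.val heq))
          · exact ⟨hss.subset, hh⟩
        · -- Wm ⊆ t' : cover contradiction via Wm between t and t'
          exfalso
          have hWst' : Wm.1 ⊂ t'.1 := by
            refine ⟨h, fun hsub => ?_⟩
            exact ht'ne (Subtype.ext (Set.Subset.antisymm hsub h))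
          exact cov_no_between hE Wm.2 (ssub_of_ne hPt1 htne) hWst'
        · -- overlap : impossible in CASE I
          exact absurd ⟨t'.1, t'.2, overlap_symm h⟩ hAtt
  obtain ⟨Z0, hZ0, hovZ0⟩ := hAtt
  set vq : Set X := Wm.1 ∩ Z0 with hvqdef
  have hvqI : vq ∈ 𝓘 := hclosed _ Wm.2 _ hZ0 hovZ0.1
  have hvqne : vq.Nonempty := hovZ0.1
  have hval : ∀ Z' ∈ 𝓘, Overlap Wm.1 Z' → Wm.1 ∩ Z' = vq :=
    fun Z' hZ' hov' => hLI Wm.1 Wm.2 Z' hZ' Z0 hZ0 hov' hovZ0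
  have hvq_cmp : ∀ D ∈ 𝓘, vq ⊆ D ∨ D ⊆ vq ∨ D ∩ vq = ∅ :=
    fun D hD => value_comparable hLI Wm.2 hZ0 hD hovZ0
  -- locate vq against C1
  have hvqC1 : vq = C1 ∨ C1 ⊂ vq ∨ vq ∩ C1 = ∅ := by
    rcases hybrid_cmp (hne := hne) hclosed hLI hhyb1 hvqI with h | h | h
    · -- C1 ⊆ vq
      rcases eq_or_ne vq C1 with hh | hh
      · exact Or.inl hh
      · exact Or.inr (Or.inl ⟨h, fun hsub => hh (Set.Subset.antisymm hsub h)⟩)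
    · -- vq ⊆ C1 : force equality
      left
      rcases hybrid_cmp (hne := hne) hclosed hLI hhyb1 hZ0 with h2 | h2 | h2
      · -- C1 ⊆ Z0
        exact Set.Subset.antisymm h (Set.subset_inter hC1Wm h2)
      · -- Z0 ⊆ C1 : contradicts overlap
        exfalso
        exact hovZ0.2.2 (Set.inter_eq_right.mpr (h2.trans hC1Wm))
      · -- Z0 ∩ C1 = ∅
        exfalso
        have : vq ⊆ Z0 ∩ C1 := Set.subset_inter Set.inter_subset_right h
        rw [h2] at this
        exact hvqne.ne_empty (Set.subset_empty_iff.mp this)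
    · exact Or.inr (Or.inr h)
  rcases hvqC1 with hcase2 | hcase3 | hcase4
  · -- CASE II : vq = C1
    have hpre := hbic.2 Wm hWmB
    have hv1mem : v1 ∈ B \ {Wm} := ⟨hv1, fun h => hWmnv1 (by simpa using h.symm)⟩
    have hymem : ystar ∈ B \ {Wm} := ⟨hyB, fun h => hynWm (by simpa using h)⟩
    have hinv := Network.preconnected_invariant hpre
      (fun t => t.1 ⊆ Wm.1 ∧ t.1 ∩ C1 = ∅) ?_ hymem hv1mem ⟨hysub.subset, hyd⟩
    · have h2 := hinv.2
      rw [hC1def, Set.inter_self] at h2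
      exact (hne _ v1.2).ne_empty h2
    · intro t t' ht ht' hadj hPt
      obtain ⟨hPt1, hPt2⟩ := hPt
      have htB : t ∈ B := ht.1
      have ht'B : t' ∈ B := ht'.1
      have htne : t ≠ Wm := fun h => ht.2 (by simpa using h)
      have ht'ne : t' ≠ Wm := fun h => ht'.2 (by simpa using h)
      have htne' : t.1.Nonempty := hne _ t.2
      rcases hadj.2 with hE | hE
      · refine ⟨hE.1.subset.trans hPt1, Set.subset_empty_iff.mp ?_⟩
        rw [← hPt2]
        exact Set.inter_subset_inter_left C1 hE.1.subset
      · have hne2 : (t'.1 ∩ Wm.1).Nonempty := htne'.mono (Set.subset_inter hE.1.subset hPt1)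
        rcases rel_cases hne2 with h | h | h
        · have hss : t'.1 ⊂ Wm.1 := ssub_of_ne h ht'ne
          rcases hclassify ht'B with hh | hh | hh
          · exfalso
            have hsub : t.1 ⊂ C1 := by rw [hC1def, ← hh]; exact hE.1
            have hcc : t.1 ⊆ t.1 ∩ C1 := Set.subset_inter subset_rfl hsub.subset
            rw [hPt2] at hcc
            exact htne'.ne_empty (Set.subset_empty_iff.mp hcc)
          · exact absurd (hmin t' ⟨ht'B, hh, t, htB, hE, hPt2⟩ hss.subset)
              (fun heq => hss.ne (congrArg Subtype.val heq))
          · exact ⟨hss.subset, hh⟩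
        · exfalso
          have hWst' : Wm.1 ⊂ t'.1 :=
            ⟨h, fun hsub => ht'ne (Subtype.ext (Set.Subset.antisymm hsub h))⟩
          exact cov_no_between hE Wm.2 (ssub_of_ne hPt1 htne) hWst'
        · -- overlap : t ⊆ t' ∩ Wm = vq = C1, contradicting disjointness
          exfalso
          have hval' : Wm.1 ∩ t'.1 = vq := hval t'.1 t'.2 (overlap_symm h)
          have : t.1 ⊆ t.1 ∩ C1 := by
            refine Set.subset_inter subset_rfl ?_
            rw [← hcase2, ← hval']
            exact Set.subset_inter hPt1 hE.1.subset
          rw [hPt2] at this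
          exact htne'.ne_empty (Set.subset_empty_iff.mp this)
  · -- CASE III : C1 ⊂ vq. Every 𝓘-cover of C1 is contained in vq, and vq separates.
    exact case_III hclosed hLI hbic hv1 hhyb1 hWmB hC1Wms hWmnv1 hmin
      hZ0 hovZ0 hval hvqI hvq_cmp hcase3 hclassify hNB
  · -- CASE IV : vq ∩ C1 = ∅
    have hpre := hbic.2 Wm hWmB
    have hv1mem : v1 ∈ B \ {Wm} := ⟨hv1, fun h => hWmnv1 (by simpa using h.symm)⟩
    have hymem : ystar ∈ B \ {Wm} := ⟨hyB, fun h => hynWm (by simpa using h)⟩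
    have hinv := Network.preconnected_invariant hpre
      (fun t => C1 ⊆ t.1 ∧ t.1 ⊂ Wm.1) ?_ hv1mem hymem ⟨subset_rfl, hC1Wms⟩
    · have : C1 ⊆ ystar.1 ∩ C1 := Set.subset_inter hinv.1 subset_rfl
      rw [hyd] at this
      exact hC1ne.ne_empty (Set.subset_empty_iff.mp this)
    · intro t t' ht ht' hadj hPt
      obtain ⟨hPt1, hPt2⟩ := hPt
      have htB : t ∈ B := ht.1
      have ht'B : t' ∈ B := ht'.1
      have htne : t ≠ Wm := fun h => ht.2 (by simpa using h)
      have ht'ne : t' ≠ Wm := fun h => ht'.2 (by simpa using h)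
      have htne' : t.1.Nonempty := hne _ t.2
      rcases hadj.2 with hE | hE
      · -- t' below t
        rcases hclassify ht'B with hh | hh | hh
        · exact ⟨by rw [hh], hh ▸ hC1Wms⟩
        · exact ⟨hh, hE.1.trans hPt2⟩
        · -- t is an entry strictly inside Wm : contradicts minimality
          exfalso
          have hss : t.1 ⊂ Wm.1 := hPt2
          exact absurd (hmin t ⟨htB, hPt1, t', ht'B, hE, hh⟩ hss.subset)
            (fun heq => hss.ne (congrArg Subtype.val heq))
      · -- t' above t
        have hne2 : (t'.1 ∩ Wm.1).Nonempty := htne'.mono (Set.subset_inter hE.1.subset hPt2.subset)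
        rcases rel_cases hne2 with h | h | h
        · exact ⟨hPt1.trans hE.1.subset, ssub_of_ne h ht'ne⟩
        · exfalso
          have hWst' : Wm.1 ⊂ t'.1 :=
            ⟨h, fun hsub => ht'ne (Subtype.ext (Set.Subset.antisymm hsub h))⟩
          exact cov_no_between hE Wm.2 hPt2 hWst'
        · exfalso
          have hval' : Wm.1 ∩ t'.1 = vq := hval t'.1 t'.2 (overlap_symm h)
          have hC1vq : C1 ⊆ vq := by
            rw [← hval']
            exact Set.subset_inter (hPt1.trans hPt2.subset) (hPt1.trans hE.1.subset)
          have : C1 ⊆ vq ∩ C1 := Set.subset_inter hC1vq subset_rfl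
          rw [hcase4] at this
          exact hC1ne.ne_empty (Set.subset_empty_iff.mp this)

end HasseFacts

end HasseLevel12
section Assembly

variable {X : Type} [Fintype X] {𝓘 : Set (Set X)}
variable {hne : ∀ A ∈ 𝓘, A.Nonempty} {huniv : Set.univ ∈ 𝓘} {hsing : ∀ x : X, {x} ∈ 𝓘}

namespace HasseFacts

local notation "HN" => hasse 𝓘 hne huniv hsing

theorem hasse_level1 (hclosed : IsClosedCS 𝓘) (hLI : PropertyL 𝓘) : (HN).Level1 := by
  intro B hBlock
  intro z1 hz1 z2 hz2
  obtain ⟨hz1B, hhyb1, u1, hu1B, hu1n, hreach1⟩ := hz1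
  obtain ⟨hz2B, hhyb2, u2, hu2B, hu2n, hreach2⟩ := hz2
  have hbic := hBlock.1
  rcases hybrid_cmp (hne := hne) hclosed hLI hhyb1 z2.2 with h | h | h
  · -- z1.1 ⊆ z2.1
    rcases eq_or_ne z1 z2 with heq | hne'
    · exact heq
    · exact absurd (ssub_of_ne h hne')
        (no_below hclosed hLI hbic hz2B hhyb2 hu2B hu2n hreach2 hz1B)
  · rcases eq_or_ne z1 z2 with heq | hne'
    · exact heq
    · exact absurd (ssub_of_ne h (Ne.symm hne'))
        (no_below hclosed hLI hbic hz1B hhyb1 hu1B hu1n hreach1 hz2B)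
  · exact (disjoint_qual_false (u2 := u2) hclosed hLI hbic hz1B hhyb1 hu1B hu1n hreach1
      hz2B hhyb2 h).elim

end HasseFacts

/-- Property (L) yields a level-1 network realizing the intersection closure. -/
theorem exists_level1_network {𝒞 : Set (Set X)} (h𝒞 : IsClusteringSystem 𝒞)
    (hL : PropertyL 𝒞) :
    ∃ N : Network X, N.Level1 ∧ N.CS = interClosure 𝒞 := by
  obtain ⟨hemp, huniv𝒞, hsing𝒞⟩ := h𝒞
  have hne : ∀ A ∈ interClosure 𝒞, A.Nonempty := fun A hA => hA.1
  have huniv : Set.univ ∈ interClosure 𝒞 := subset_interClosure hemp huniv𝒞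
  have hsing : ∀ x : X, {x} ∈ interClosure 𝒞 := fun x => subset_interClosure hemp (hsing𝒞 x)
  have hclosed : IsClosedCS (interClosure 𝒞) :=
    fun A hA B hB hne' => inter_mem_interClosure hA hB hne'
  have hLI : PropertyL (interClosure 𝒞) := propertyL_interClosure hL
  exact ⟨hasse (interClosure 𝒞) hne huniv hsing,
    HasseFacts.hasse_level1 hclosed hLI, HasseFacts.CS_eq⟩

end Assembly
/-- For a clustering system `𝒞` the following are equivalent:
(1) `𝒞` is compatible with a level-1 network (∃ level-1 `N` with `𝒞 ⊆ 𝒞_N`);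
(2) there is a level-1 network `N` with `𝒞_N = 𝓘(𝒞)`;
(3) `𝒞` satisfies property (L). -/
theorem level1_compatibility_tfae (X : Type) [Fintype X] (𝒞 : Set (Set X))
    (h𝒞 : IsClusteringSystem 𝒞) :
    ((∃ N : Network X, N.Level1 ∧ 𝒞 ⊆ N.CS) ↔ PropertyL 𝒞) ∧
    ((∃ N : Network X, N.Level1 ∧ N.CS = interClosure 𝒞) ↔ PropertyL 𝒞) := by
  constructor
  · constructor
    · rintro ⟨N, hl1, hsub⟩
      have hP := Network.level1_propertyL hl1
      exact fun C1 h1 C2 h2 C3 h3 h12 h13 =>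
        hP C1 (hsub h1) C2 (hsub h2) C3 (hsub h3) h12 h13
    · intro hL
      obtain ⟨N, hl1, hCS⟩ := exists_level1_network h𝒞 hL
      refine ⟨N, hl1, ?_⟩
      rw [hCS]
      exact subset_interClosure h𝒞.1
  · constructor
    · rintro ⟨N, hl1, hCS⟩
      have hP := Network.level1_propertyL hl1
      intro C1 h1 C2 h2 C3 h3 h12 h13
      have hmem : ∀ {C : Set X}, C ∈ 𝒞 → C ∈ N.CS := by
        intro C hC
        rw [hCS]
        exact subset_interClosure h𝒞.1 hC
      exact hP C1 (hmem h1) C2 (hmem h2) C3 (hmem h3) h12 h13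
    · intro hL
      exact exists_level1_network h𝒞 hL
end PhyloNet
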